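/- arXiv:1406.4571 — 7 statements merged into one kernel-verified Lean document; each statement's English description precedes it below -/
import Mathlib

section
/- Let L1, L2, L3 be real numbers with L1 + L2 > 0 and L1 + L3 > 0, and set ν = min{L1 + L2, L1 + L3}. Then for any two symmetric traceless real 2×2 matrices G₁, G₂ (playing the role of the partial derivatives ∂₁Q, ∂₂Q of a map Q into S^(2)), one has L1·Σ_{i,j,k}((G_k)_{ij})² + L2·Σ_{i,j,k}(G_j)_{ik}(G_k)_{ij} + L3·Σ_i (Σ_j (G_j)_{ij})(Σ_k (G_k)_{ik}) ≥ ν·Σ_{i,j,k}((G_k)_{ij})², where all indices range over {1,2}. -/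
open Finset

/-- 2D coercivity of the elastic energy, pointwise form.
If `L1 + L2 > 0` and `L1 + L3 > 0` and `ν = min (L1+L2) (L1+L3)`, then for any
symmetric traceless real 2×2 matrices `G 0, G 1` (the partial derivatives of a
map into `S^(2)`) the elastic density is coercive. -/
theorem elastic_coercivity_2d (L1 L2 L3 : ℝ) (h12 : 0 < L1 + L2) (h13 : 0 < L1 + L3)
    (ν : ℝ) (hν : ν = min (L1 + L2) (L1 + L3))
    (G : Fin 2 → Matrix (Fin 2) (Fin 2) ℝ)
    (hsym : ∀ k, (G k).IsSymm) (htr : ∀ k, (G k).trace = 0) :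
    L1 * (∑ i, ∑ j, ∑ k, (G k i j) ^ 2)
      + L2 * (∑ i, ∑ j, ∑ k, G j i k * G k i j)
      + L3 * (∑ i, (∑ j, G j i j) * (∑ k, G k i k))
    ≥ ν * (∑ i, ∑ j, ∑ k, (G k i j) ^ 2) := by
  have hs0 := (hsym 0).apply 0 1
  have hs1 := (hsym 1).apply 0 1
  have ht0 := htr 0
  have ht1 := htr 1
  simp [Matrix.trace, Matrix.diag, Fin.sum_univ_two] at ht0 ht1
  have hνle1 : ν ≤ L1 + L2 := hν ▸ min_le_left _ _
  have hνle2 : ν ≤ L1 + L3 := hν ▸ min_le_right _ _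
  have e0 : G 0 1 1 = -G 0 0 0 := by linarith
  have e1 : G 1 1 1 = -G 1 0 0 := by linarith
  simp only [Fin.sum_univ_two, hs0, hs1, e0, e1]
  nlinarith [sq_nonneg (G 0 0 0 - G 1 0 1), sq_nonneg (G 0 0 1 + G 1 0 0),
    sq_nonneg (G 0 0 0 + G 1 0 1), sq_nonneg (G 0 0 1 - G 1 0 0),
    mul_nonneg (sub_nonneg.2 hνle1) (add_nonneg (sq_nonneg (G 0 0 0 - G 1 0 1)) (sq_nonneg (G 0 0 1 + G 1 0 0))),
    mul_nonneg (sub_nonneg.2 hνle2) (add_nonneg (sq_nonneg (G 0 0 0 + G 1 0 1)) (sq_nonneg (G 0 0 1 - G 1 0 0)))]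
end

section
/- Let Ω ⊂ ℝ² be a bounded open set with smooth boundary, let a ∈ ℝ, c > 0, L4 ≠ 0, and L1, L2, L3 satisfy L1 + L2 > 0 and L1 + L3 > 0, so that ζ := 2L1 + L2 + L3 > 0. Set η₁ := ζ² / ((1+4√2)² L4²). Let Q : [0,T] × closure(Ω) → S^(2) be continuous, C¹ in t and C² in x on (0,T) × Ω, solve the 2D Landau–de Gennes gradient-flow system on (0,T) × Ω, and satisfy the time-independent Dirichlet condition Q(t,x) = Q̃(x) for all x ∈ ∂Ω and t ∈ [0,T], where Q̃ = Q(0,·)|_{∂Ω}. If sup_{x∈∂Ω}|Q̃(x)| ≤ sup_{x∈Ω}|Q(0,x)| < √(2η₁) and |a| ≤ 2cη₁, then sup_{(t,x) ∈ (0,T)×Ω} |Q(t,x)| ≤ √(2η₁). -/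
open MeasureTheory Set

noncomputable section

/-- The plane `ℝ²`. -/
abbrev E2 := EuclideanSpace ℝ (Fin 2)

/-- Partial derivative `∂_k f` of a scalar function on `ℝ²`. -/
noncomputable def pd (k : Fin 2) (f : E2 → ℝ) (x : E2) : ℝ :=
  fderiv ℝ f x (EuclideanSpace.single k 1)

/-- Second partial derivative `∂_l ∂_k f`. -/
noncomputable def pd2 (l k : Fin 2) (f : E2 → ℝ) (x : E2) : ℝ :=
  pd l (fun y => pd k f y) x

/-- Frobenius norm `|M| = √(∑ M_{ij}²)` of a real 2×2 matrix. -/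
noncomputable def fnorm (M : Matrix (Fin 2) (Fin 2) ℝ) : ℝ :=
  Real.sqrt (∑ i, ∑ j, (M i j) ^ 2)

/-- The 2D Landau–de Gennes gradient-flow system at the point `(t, x)`:
`∂_t Q_{ij} = 2L1 ΔQ_{ij} − a Q_{ij} − c tr(Q²) Q_{ij}
  + (L2+L3)(∂_j∂_k Q_{ik} + ∂_i∂_k Q_{jk}) − (L2+L3) ∂_l∂_k Q_{lk} δ_{ij}
  + 2L4 ∂_l Q_{ij} ∂_k Q_{lk} + 2L4 Q_{lk} ∂_l∂_k Q_{ij}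
  − L4 ∂_i Q_{kl} ∂_j Q_{kl} + (L4/2)|∇Q|² δ_{ij}`. -/
def LdGeq (a c L1 L2 L3 L4 : ℝ) (Q : ℝ → E2 → Matrix (Fin 2) (Fin 2) ℝ)
    (t : ℝ) (x : E2) : Prop :=
  ∀ i j : Fin 2,
    deriv (fun s => Q s x i j) t =
      2 * L1 * (∑ k, pd2 k k (fun y => Q t y i j) x)
      - a * Q t x i j
      - c * (Q t x * Q t x).trace * Q t x i j
      + (L2 + L3) * ((∑ k, pd2 j k (fun y => Q t y i k) x)
          + (∑ k, pd2 i k (fun y => Q t y j k) x))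
      - (L2 + L3) * (∑ l, ∑ k, pd2 l k (fun y => Q t y l k) x)
          * (if i = j then (1 : ℝ) else 0)
      + 2 * L4 * (∑ l, pd l (fun y => Q t y i j) x * (∑ k, pd k (fun y => Q t y l k) x))
      + 2 * L4 * (∑ l, ∑ k, Q t x l k * pd2 l k (fun y => Q t y i j) x)
      - L4 * (∑ k, ∑ l, pd i (fun y => Q t y k l) x * pd j (fun y => Q t y k l) x)
      + (L4 / 2) * (∑ k, ∑ i', ∑ j', (pd k (fun y => Q t y i' j') x) ^ 2)
          * (if i = j then (1 : ℝ) else 0)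


namespace LdGaux
open Filter Topology


/-- basis vector -/
noncomputable def ee (k : Fin 2) : E2 := EuclideanSpace.single k 1

lemma e2_decomp (v : E2) : v = v 0 • ee 0 + v 1 • ee 1 := by
  ext i
  fin_cases i <;> simp [ee, EuclideanSpace.single_apply]

lemma clm_apply_decomp (L : E2 →L[ℝ] ℝ) (v : E2) :
    L v = v 0 * L (ee 0) + v 1 * L (ee 1) := by
  conv_lhs => rw [e2_decomp v]
  simp

variable {U : Set E2} (hU : IsOpen U) {x : E2} (hx : x ∈ U)

section basic
variable {f g : E2 → ℝ}

include hU hx in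
lemma diffAt_of_contDiffOn {n : ℕ} (hf : ContDiffOn ℝ (n+1) f U) :
    DifferentiableAt ℝ f x :=
  (hf.differentiableOn (by simp)).differentiableAt
    (hU.mem_nhds hx)

include hU hx in
lemma fderiv_diffAt (hf : ContDiffOn ℝ 2 f U) :
    DifferentiableAt ℝ (fderiv ℝ f) x := by
  have h : ContDiffOn ℝ 1 (fderiv ℝ f) U :=
    hf.fderiv_of_isOpen hU (le_refl (2:WithTop ℕ∞))
  exact (h.differentiableOn one_ne_zero).differentiableAt (hU.mem_nhds hx)

include hU hx in
lemma pd_diffAt (hf : ContDiffOn ℝ 2 f U) (k : Fin 2) :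
    DifferentiableAt ℝ (fun y => pd k f y) x := by
  have : (fun y => pd k f y) = fun y => (fderiv ℝ f y) (ee k) := rfl
  rw [this]
  exact (fderiv_diffAt hU hx hf).clm_apply (differentiableAt_const _)

include hU hx in
lemma pd2_eq_second (hf : ContDiffOn ℝ 2 f U) (l k : Fin 2) :
    pd2 l k f x = (fderiv ℝ (fderiv ℝ f) x) (ee l) (ee k) := by
  have hdf := fderiv_diffAt hU hx hf
  have h1 : (fun y => pd k f y) = fun y => (fderiv ℝ f y) ((fun _ : E2 => ee k) y) := rfl
  show fderiv ℝ (fun y => pd k f y) x (ee l) = _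
  rw [h1, fderiv_clm_apply hdf (differentiableAt_const _)]
  simp

include hU hx in
lemma pd2_symm (hf : ContDiffOn ℝ 2 f U) (l k : Fin 2) :
    pd2 l k f x = pd2 k l f x := by
  rw [pd2_eq_second hU hx hf, pd2_eq_second hU hx hf]
  have hev : ∀ᶠ y in nhds x, HasFDerivAt f (fderiv ℝ f y) y := by
    filter_upwards [hU.mem_nhds hx] with y hy
    exact (diffAt_of_contDiffOn hU hy (n := 1) hf).hasFDerivAt
  exact second_derivative_symmetric_of_eventually hev
    (fderiv_diffAt hU hx hf).hasFDerivAt _ _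

include hU hx in
lemma pd_congr (h : ∀ y ∈ U, f y = g y) (k : Fin 2) :
    pd k f x = pd k g x := by
  have : f =ᶠ[nhds x] g := by
    filter_upwards [hU.mem_nhds hx] with y hy using h y hy
  unfold pd
  rw [this.fderiv_eq]

include hU hx in
lemma pd_congr_neg (h : ∀ y ∈ U, f y = -g y) (k : Fin 2) :
    pd k f x = -pd k g x := by
  rw [pd_congr hU hx h k]
  show fderiv ℝ (fun y => -g y) x (ee k) = -(fderiv ℝ g x (ee k))
  rw [fderiv_fun_neg]
  simp

include hU hx in
lemma pd2_congr_eq (h : ∀ y ∈ U, f y = g y) (l k : Fin 2) :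
    pd2 l k f x = pd2 l k g x := by
  unfold pd2
  exact pd_congr hU hx (fun y hy => pd_congr hU hy (fun z hz => h z hz) k) l

include hU hx in
lemma pd2_congr_neg (h : ∀ y ∈ U, f y = -g y) (l k : Fin 2) :
    pd2 l k f x = -pd2 l k g x := by
  unfold pd2
  exact pd_congr_neg hU hx (fun y hy => pd_congr_neg hU hy (fun z hz => h z hz) k) l

end basic



/-- first-order product rule for a sum of four squares -/
lemma pd_sumsq {f00 f01 f10 f11 : E2 → ℝ} {y : E2}
    (h00 : DifferentiableAt ℝ f00 y) (h01 : DifferentiableAt ℝ f01 y)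
    (h10 : DifferentiableAt ℝ f10 y) (h11 : DifferentiableAt ℝ f11 y) (k : Fin 2) :
    pd k (fun z => f00 z ^ 2 + f01 z ^ 2 + f10 z ^ 2 + f11 z ^ 2) y
      = 2 * f00 y * pd k f00 y + 2 * f01 y * pd k f01 y
        + 2 * f10 y * pd k f10 y + 2 * f11 y * pd k f11 y := by
  have H : ∀ (f : E2 → ℝ), DifferentiableAt ℝ f y →
      HasFDerivAt (fun z => f z ^ 2) ((2 * f y) • fderiv ℝ f y) y := by
    intro f hf
    have this : HasFDerivAt (fun z => f z * f z) (f y • fderiv ℝ f y + f y • fderiv ℝ f y) y := hf.hasFDerivAt.mul hf.hasFDerivAt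
    have h2 : (fun z => f z * f z) = fun z => f z ^ 2 := by funext z; ring
    rw [h2] at this
    convert this using 1
    module
  have := (((H f00 h00).add (H f01 h01)).add (H f10 h10)).add (H f11 h11)
  unfold pd
  rw [HasFDerivAt.fderiv (f := fun z => f00 z ^ 2 + f01 z ^ 2 + f10 z ^ 2 + f11 z ^ 2) this]
  simp only [ContinuousLinearMap.add_apply, ContinuousLinearMap.coe_smul', Pi.smul_apply,
    smul_eq_mul]

lemma diffAt_sumsq {f00 f01 f10 f11 : E2 → ℝ} {y : E2}
    (h00 : DifferentiableAt ℝ f00 y) (h01 : DifferentiableAt ℝ f01 y)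
    (h10 : DifferentiableAt ℝ f10 y) (h11 : DifferentiableAt ℝ f11 y) :
    DifferentiableAt ℝ (fun z => f00 z ^ 2 + f01 z ^ 2 + f10 z ^ 2 + f11 z ^ 2) y := by
  fun_prop

/-- left-endpoint maximum gives nonnegative derivative -/
lemma deriv_nonneg_of_left_max {g : ℝ → ℝ} {d t0 : ℝ}
    (h : HasDerivAt g d t0) (h0 : 0 < t0) (hm : ∀ s ∈ Icc 0 t0, g s ≤ g t0) :
    0 ≤ d := by
  have hs := h.hasDerivWithinAt (s := Iio t0)
  have htend : Tendsto (slope g t0) (𝓝[<] t0) (𝓝 d) := by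
    have := hasDerivWithinAt_iff_tendsto_slope.1 hs
    refine this.mono_left (nhdsWithin_mono _ ?_)
    intro z hz; exact ⟨hz, ne_of_lt hz⟩
  refine ge_of_tendsto htend ?_
  filter_upwards [Ioo_mem_nhdsLT_of_mem (by constructor <;> [exact h0; rfl] :
      t0 ∈ Ioc 0 t0)] with s hs'
  have h1 : g s ≤ g t0 := hm s ⟨le_of_lt hs'.1, le_of_lt hs'.2⟩
  have h2 : s - t0 < 0 := by linarith [hs'.2]
  have hsl : slope g t0 s = (g s - g t0) / (s - t0) := slope_def_field g t0 s
  rw [hsl, div_nonneg_iff]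
  right
  exact ⟨by linarith, le_of_lt h2⟩

/-- second derivative test at interior max, directional version -/
lemma second_deriv_test {φ : ℝ → ℝ} {φ' : ℝ → ℝ} {D ε : ℝ} (hε : 0 < ε)
    (hd : ∀ s, |s| < ε → HasDerivAt φ (φ' s) s)
    (hd2 : HasDerivAt φ' D 0)
    (hmax : ∀ s, |s| < ε → φ s ≤ φ 0) : D ≤ 0 := by
  by_contra hD
  push_neg at hD
  -- φ' 0 = 0
  have hloc : IsLocalMax φ 0 := by
    have : Ioo (-ε) ε ∈ 𝓝 (0:ℝ) := Ioo_mem_nhds (by linarith) hε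
    filter_upwards [this] with s hs
    exact hmax s (abs_lt.2 ⟨hs.1, hs.2⟩)
  have h0 : φ' 0 = 0 := by
    have := hloc.deriv_eq_zero
    rw [← (hd 0 (by simpa using hε)).deriv]
    exact this
  -- φ' positive on a right neighborhood
  have hslope : Tendsto (fun s => φ' s / s) (𝓝[>] 0) (𝓝 D) := by
    have := hasDerivAt_iff_tendsto_slope.1 hd2
    have h2 : Tendsto (slope φ' 0) (𝓝[>] 0) (𝓝 D) := by
      refine this.mono_left (nhdsWithin_mono _ ?_)
      intro z hz; exact ne_of_gt hz
    refine h2.congr' ?_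
    filter_upwards [self_mem_nhdsWithin] with s hs
    rw [slope_def_field, h0]; simp
  have hev : ∀ᶠ s in 𝓝[>] (0:ℝ), 0 < φ' s := by
    have := hslope.eventually (eventually_gt_nhds (show D/2 < D by linarith))
    filter_upwards [this, self_mem_nhdsWithin] with s h1 h2
    have hs0 : (0:ℝ) < s := h2
    have h3 : 0 < φ' s / s := lt_trans (by linarith) h1
    rcases div_pos_iff.1 h3 with ⟨hn, _⟩ | ⟨_, hneg⟩
    · exact hn
    · linarith
  obtain ⟨u, hu, hu2⟩ := (nhdsGT_basis_of_exists_gt (α := ℝ) ⟨1, one_pos⟩).eventually_iff.1 hev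
  set r := min (u/2) (ε/2) with hr
  have hr0 : 0 < r := lt_min (by linarith) (by linarith)
  have hmono : StrictMonoOn φ (Icc 0 r) := by
    apply strictMonoOn_of_deriv_pos (convex_Icc _ _)
    · intro z hz
      have hze : |z| < ε := by
        rw [abs_lt]
        refine ⟨by linarith [hz.1], ?_⟩
        have h1 := hz.2
        have h2 := min_le_right (u/2) (ε/2)
        linarith
      exact ((hd z hze).continuousAt).continuousWithinAt
    · intro z hz
      rw [interior_Icc] at hz
      have hzε : |z| < ε := by
        rw [abs_lt]
        refine ⟨by linarith [hz.1], ?_⟩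
        have := hz.2; have := min_le_right (u/2) (ε/2); linarith
      rw [(hd z hzε).deriv]
      apply hu2
      constructor
      · exact hz.1
      · have := hz.2; have := min_le_left (u/2) (ε/2); linarith
  have hlt : φ 0 < φ r := hmono ⟨le_refl 0, le_of_lt hr0⟩ ⟨le_of_lt hr0, le_refl r⟩ hr0
  have : φ r ≤ φ 0 := by
    apply hmax
    rw [abs_lt]
    have := min_le_right (u/2) (ε/2)
    constructor <;> [linarith; linarith]
  linarith




lemma grad_zero {U : Set E2} (hU : IsOpen U) {x0 : E2} (hx : x0 ∈ U)
    {g : E2 → ℝ} (hmax : ∀ y ∈ U, g y ≤ g x0) (k : Fin 2) :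
    pd k g x0 = 0 := by
  have hloc : IsLocalMax g x0 := by
    filter_upwards [hU.mem_nhds hx] with y hy using hmax y hy
  show fderiv ℝ g x0 (EuclideanSpace.single k 1) = 0
  rw [hloc.fderiv_eq_zero]
  rfl

lemma quadform_nonpos {U : Set E2} (hU : IsOpen U) {x0 : E2} (hx : x0 ∈ U)
    {g : E2 → ℝ} (hg : ContDiffOn ℝ 2 g U) (hmax : ∀ y ∈ U, g y ≤ g x0)
    (v1 v2 : ℝ) :
    v1 ^ 2 * pd2 0 0 g x0 + v1 * v2 * (pd2 0 1 g x0 + pd2 1 0 g x0)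
      + v2 ^ 2 * pd2 1 1 g x0 ≤ 0 := by
  set vv : E2 := v1 • ee 0 + v2 • ee 1 with hvv
  obtain ⟨ε, hε, hball⟩ := Metric.isOpen_iff.1 hU x0 hx
  set ε' : ℝ := ε / (‖vv‖ + 1) with hε'
  have hnorm : (0:ℝ) < ‖vv‖ + 1 := by positivity
  have hε'0 : 0 < ε' := div_pos hε hnorm
  set c : ℝ → E2 := fun s => x0 + s • vv with hc
  have hc0 : c 0 = x0 := by simp [hc]
  have hmem : ∀ s : ℝ, |s| < ε' → c s ∈ U := by
    intro s hs
    apply hball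
    simp only [Metric.mem_ball, hc, dist_eq_norm]
    have : x0 + s • vv - x0 = s • vv := by abel
    rw [this, norm_smul]
    calc ‖s‖ * ‖vv‖ ≤ |s| * (‖vv‖ + 1) := by
          rw [Real.norm_eq_abs]
          apply mul_le_mul_of_nonneg_left (by linarith) (abs_nonneg s)
      _ < ε' * (‖vv‖ + 1) := by
          apply mul_lt_mul_of_pos_right hs hnorm
      _ = ε := by rw [hε', div_mul_cancel₀ _ (ne_of_gt hnorm)]
  have hcder : ∀ s : ℝ, HasDerivAt c vv s := by
    intro s
    have h1 : HasDerivAt (fun s : ℝ => s • vv) ((1:ℝ) • vv) s :=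
      (hasDerivAt_id s).smul_const vv
    simpa [hc] using h1.const_add x0
  set φ : ℝ → ℝ := fun s => g (c s) with hφ
  set φ' : ℝ → ℝ := fun s => fderiv ℝ g (c s) vv with hφ'
  have hd : ∀ s, |s| < ε' → HasDerivAt φ (φ' s) s := by
    intro s hs
    exact ((diffAt_of_contDiffOn hU (hmem s hs) (n := 1) hg).hasFDerivAt).comp_hasDerivAt s (hcder s)
  set f'' := fderiv ℝ (fderiv ℝ g) x0 with hf''
  set D : ℝ := f'' vv vv with hD
  have hd2 : HasDerivAt φ' D 0 := by
    have h1 : HasDerivAt (fun s => fderiv ℝ g (c s)) (f'' vv) 0 := by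
      have h0 := ((fderiv_diffAt hU hx hg).hasFDerivAt (f := fderiv ℝ g))
      rw [← hc0] at h0
      have h2 := h0.comp_hasDerivAt 0 (hcder 0)
      rw [hf'', ← hc0]
      exact h2
    have h3 := h1.clm_apply (hasDerivAt_const 0 vv)
    simpa [hc0] using h3
  have hmx : ∀ s, |s| < ε' → φ s ≤ φ 0 := by
    intro s hs
    rw [hφ]
    simp only [hc0]
    exact hmax _ (hmem s hs)
  have hD0 : D ≤ 0 := second_deriv_test hε'0 hd hd2 hmx
  have hexp : D = v1 ^ 2 * pd2 0 0 g x0 + v1 * v2 * (pd2 0 1 g x0 + pd2 1 0 g x0)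
      + v2 ^ 2 * pd2 1 1 g x0 := by
    rw [hD, hvv]
    rw [pd2_eq_second hU hx hg 0 0, pd2_eq_second hU hx hg 0 1,
      pd2_eq_second hU hx hg 1 0, pd2_eq_second hU hx hg 1 1]
    simp only [map_add, _root_.map_smul, ContinuousLinearMap.add_apply,
      ContinuousLinearMap.coe_smul', Pi.smul_apply, smul_eq_mul]
    ring
  linarith [hexp ▸ hD0]



/-- second-order product rule for the sum of four squares -/
lemma pd2_sumsq {U : Set E2} (hU : IsOpen U) {x : E2} (hx : x ∈ U)
    {f00 f01 f10 f11 : E2 → ℝ}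
    (h00 : ContDiffOn ℝ 2 f00 U) (h01 : ContDiffOn ℝ 2 f01 U)
    (h10 : ContDiffOn ℝ 2 f10 U) (h11 : ContDiffOn ℝ 2 f11 U) (l k : Fin 2) :
    pd2 l k (fun z => f00 z ^ 2 + f01 z ^ 2 + f10 z ^ 2 + f11 z ^ 2) x
      = 2 * (pd l f00 x * pd k f00 x + f00 x * pd2 l k f00 x)
      + 2 * (pd l f01 x * pd k f01 x + f01 x * pd2 l k f01 x)
      + 2 * (pd l f10 x * pd k f10 x + f10 x * pd2 l k f10 x)
      + 2 * (pd l f11 x * pd k f11 x + f11 x * pd2 l k f11 x) := by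
  have step1 : pd2 l k (fun z => f00 z ^ 2 + f01 z ^ 2 + f10 z ^ 2 + f11 z ^ 2) x
      = pd l (fun y => 2 * f00 y * pd k f00 y + 2 * f01 y * pd k f01 y
          + 2 * f10 y * pd k f10 y + 2 * f11 y * pd k f11 y) x := by
    apply pd_congr hU hx
    intro y hy
    exact pd_sumsq (diffAt_of_contDiffOn hU hy (n := 1) h00)
      (diffAt_of_contDiffOn hU hy (n := 1) h01)
      (diffAt_of_contDiffOn hU hy (n := 1) h10)
      (diffAt_of_contDiffOn hU hy (n := 1) h11) k
  rw [step1]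
  -- now product rule for each term
  have key : ∀ (f : E2 → ℝ), ContDiffOn ℝ 2 f U →
      HasFDerivAt (fun y => 2 * f y * pd k f y)
        ((2 * f x) • fderiv ℝ (fun y => pd k f y) x + (pd k f x) • ((2:ℝ) • fderiv ℝ f x)) x := by
    intro f hf
    have hdf : DifferentiableAt ℝ f x := diffAt_of_contDiffOn hU hx (n := 1) hf
    have hdp : DifferentiableAt ℝ (fun y => pd k f y) x := pd_diffAt hU hx hf k
    have h2f : HasFDerivAt (fun y => 2 * f y) ((2:ℝ) • fderiv ℝ f x) x := by
      have := (hdf.hasFDerivAt).const_smul (2:ℝ)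
      exact this
    exact h2f.mul hdp.hasFDerivAt
  have h1 := key f00 h00
  have h2 := key f01 h01
  have h3 := key f10 h10
  have h4 := key f11 h11
  have htot := ((h1.add h2).add h3).add h4
  show fderiv ℝ _ x (EuclideanSpace.single l 1) = _
  rw [HasFDerivAt.fderiv (f := fun y => 2 * f00 y * pd k f00 y + 2 * f01 y * pd k f01 y
    + 2 * f10 y * pd k f10 y + 2 * f11 y * pd k f11 y) htot]
  simp only [ContinuousLinearMap.add_apply, ContinuousLinearMap.coe_smul', Pi.smul_apply,
    smul_eq_mul]
  show 2 * f00 x * pd2 l k f00 x + pd k f00 x * (2 * pd l f00 x)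
      + (2 * f01 x * pd2 l k f01 x + pd k f01 x * (2 * pd l f01 x))
      + (2 * f10 x * pd2 l k f10 x + pd k f10 x * (2 * pd l f10 x))
      + (2 * f11 x * pd2 l k f11 x + pd k f11 x * (2 * pd l f11 x)) = _
  ring

/-- time derivative of the squared norm along a solution -/
lemma hasDerivAt_sumsq_time {g00 g01 g10 g11 : ℝ → ℝ} {t : ℝ}
    (h00 : DifferentiableAt ℝ g00 t) (h01 : DifferentiableAt ℝ g01 t)
    (h10 : DifferentiableAt ℝ g10 t) (h11 : DifferentiableAt ℝ g11 t) :
    HasDerivAt (fun s => g00 s ^ 2 + g01 s ^ 2 + g10 s ^ 2 + g11 s ^ 2)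
      (2 * g00 t * deriv g00 t + 2 * g01 t * deriv g01 t
        + 2 * g10 t * deriv g10 t + 2 * g11 t * deriv g11 t) t := by
  have k : ∀ (g : ℝ → ℝ), DifferentiableAt ℝ g t →
      HasDerivAt (fun s => g s ^ 2) (2 * g t * deriv g t) t := by
    intro g hg
    have h : HasDerivAt (fun s => g s ^ 2) (((2:ℕ):ℝ) * g t ^ (2 - 1) * deriv g t) t := hg.hasDerivAt.pow 2
    convert h using 1
    norm_num
  exact ((((k g00 h00).add (k g01 h01)).add (k g10 h10)).add (k g11 h11))



lemma final_algebra (a c L4 ζ η₁ q1 q2 p01 p02 p11 p12 s001 s002 s011 s012 s111 s112 : ℝ)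
    (hc : 0 < c) (hζ : 0 < ζ) (hL4 : L4 ≠ 0)
    (hη : η₁ = ζ ^ 2 / ((1 + 4 * Real.sqrt 2) ^ 2 * L4 ^ 2))
    (hm1 : 2 * η₁ < 2 * (q1 ^ 2 + q2 ^ 2))
    (hm2 : 2 * (q1 ^ 2 + q2 ^ 2) ≤ 2 * ζ ^ 2 / (9 * L4 ^ 2))
    (ha : |a| ≤ 2 * c * η₁)
    (hg0 : q1 * p01 + q2 * p02 = 0) (hg1 : q1 * p11 + q2 * p12 = 0)
    (hH : ∀ v1 v2 : ℝ,
      v1 ^ 2 * (4 * (p01 ^ 2 + p02 ^ 2 + q1 * s001 + q2 * s002))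
      + v1 * v2 * (2 * (4 * (p01 * p11 + p02 * p12 + q1 * s011 + q2 * s012)))
      + v2 ^ 2 * (4 * (p11 ^ 2 + p12 ^ 2 + q1 * s111 + q2 * s112)) ≤ 0)
    (hdt : 0 ≤ 2 * ((ζ / 2 + L4 * q1) * (4 * (p01 ^ 2 + p02 ^ 2 + q1 * s001 + q2 * s002))
        + 2 * (L4 * q2) * (4 * (p01 * p11 + p02 * p12 + q1 * s011 + q2 * s012))
        + (ζ / 2 - L4 * q1) * (4 * (p11 ^ 2 + p12 ^ 2 + q1 * s111 + q2 * s112)))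
      - 2 * ζ * (2 * (p01 ^ 2 + p02 ^ 2) + 2 * (p11 ^ 2 + p12 ^ 2))
      - 6 * L4 * (q1 * (2 * (p01 ^ 2 + p02 ^ 2) - 2 * (p11 ^ 2 + p12 ^ 2))
          + 2 * q2 * (2 * (p01 * p11 + p02 * p12)))
      - 2 * a * (2 * (q1 ^ 2 + q2 ^ 2)) - 2 * c * (2 * (q1 ^ 2 + q2 ^ 2)) ^ 2
      + 8 * L4 * ((q1 * p01 + q2 * p02) * (p01 + p12) + (q1 * p11 + q2 * p12) * (p02 - p11))) :
    False := by
  have hL42 : (0:ℝ) < L4 ^ 2 := by positivity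
  have hη₁pos : 0 < η₁ := by
    rw [hη]
    have h2 : (0:ℝ) < 1 + 4 * Real.sqrt 2 := by positivity
    positivity
  have hqb : 9 * L4 ^ 2 * (q1 ^ 2 + q2 ^ 2) ≤ ζ ^ 2 := by
    rw [le_div_iff₀ (by positivity : (0:ℝ) < 9 * L4 ^ 2)] at hm2
    nlinarith only [hm2]
  obtain ⟨m, hmd⟩ : ∃ x : ℝ, 2 * (q1 ^ 2 + q2 ^ 2) = x := ⟨_, rfl⟩
  rw [hmd] at hm1
  simp only [hmd] at hdt
  have hm0 : 0 < m := by linarith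
  have haL : -(2 * c * η₁) ≤ a := (abs_le.1 ha).1
  obtain ⟨H00, hH00⟩ : ∃ x : ℝ, 4 * (p01 ^ 2 + p02 ^ 2 + q1 * s001 + q2 * s002) = x := ⟨_, rfl⟩
  obtain ⟨H01, hH01⟩ : ∃ x : ℝ, 4 * (p01 * p11 + p02 * p12 + q1 * s011 + q2 * s012) = x := ⟨_, rfl⟩
  obtain ⟨H11, hH11⟩ : ∃ x : ℝ, 4 * (p11 ^ 2 + p12 ^ 2 + q1 * s111 + q2 * s112) = x := ⟨_, rfl⟩
  obtain ⟨B00, hB00d⟩ : ∃ x : ℝ, 2 * (p01 ^ 2 + p02 ^ 2) = x := ⟨_, rfl⟩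
  obtain ⟨B11, hB11d⟩ : ∃ x : ℝ, 2 * (p11 ^ 2 + p12 ^ 2) = x := ⟨_, rfl⟩
  obtain ⟨B01, hB01d⟩ : ∃ x : ℝ, 2 * (p01 * p11 + p02 * p12) = x := ⟨_, rfl⟩
  have hzero : (q1 * p01 + q2 * p02) * (p01 + p12) + (q1 * p11 + q2 * p12) * (p02 - p11)
      = 0 := by rw [hg0, hg1]; ring
  rw [hzero] at hdt
  simp only [mul_zero, add_zero] at hdt
  simp only [hH00, hH01, hH11] at hH hdt
  simp only [hB00d, hB11d, hB01d] at hdt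
  obtain ⟨QB, hQBd⟩ : ∃ x : ℝ, q1 * (B00 - B11) + 2 * q2 * B01 = x := ⟨_, rfl⟩
  rw [hQBd] at hdt
  obtain ⟨Lq1, hLq1⟩ : ∃ x : ℝ, L4 * q1 = x := ⟨_, rfl⟩
  obtain ⟨Lq2, hLq2⟩ : ∃ x : ℝ, L4 * q2 = x := ⟨_, rfl⟩
  simp only [hLq1, hLq2] at hdt
  clear hH00 hH01 hH11 hzero hm2 ha hη
  have hGram : B01 ^ 2 ≤ B00 * B11 := by
    rw [← hB00d, ← hB01d, ← hB11d]
    nlinarith only [sq_nonneg (p01 * p12 - p02 * p11)]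
  have hLq : Lq1 ^ 2 + Lq2 ^ 2 ≤ ζ ^ 2 / 9 := by
    rw [← hLq1, ← hLq2]; nlinarith only [hqb]
  have h9 : Lq1 ^ 2 ≤ ζ ^ 2 / 9 := by nlinarith only [hLq, sq_nonneg Lq2]
  have hαpos : 0 < ζ / 2 + Lq1 := by nlinarith only [h9, hζ, sq_nonneg (ζ / 2 + Lq1), mul_pos hζ hζ]
  have hdet : Lq2 ^ 2 ≤ (ζ / 2 + Lq1) * (ζ / 2 - Lq1) := by nlinarith only [hLq, sq_nonneg ζ]
  have hH11n : H11 ≤ 0 := by have := hH 0 1; linarith only [this]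
  have hE : (ζ / 2 + Lq1) * H00 + 2 * Lq2 * H01 + (ζ / 2 - Lq1) * H11 ≤ 0 := by
    have hq := hH (ζ / 2 + Lq1) Lq2
    by_contra hcon
    push_neg at hcon
    nlinarith only [mul_pos hαpos hcon, hq,
      mul_nonpos_of_nonneg_of_nonpos
        (by nlinarith only [hdet] : (0:ℝ) ≤ (ζ / 2 + Lq1) * (ζ / 2 - Lq1) - Lq2 ^ 2) hH11n]
  have hB00n : 0 ≤ B00 := by rw [← hB00d]; positivity
  have hB11n : 0 ≤ B11 := by rw [← hB11d]; positivity
  have hCS2 : QB ^ 2 ≤ (q1 ^ 2 + q2 ^ 2) * ((B00 - B11) ^ 2 + (2 * B01) ^ 2) := by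
    rw [← hQBd]
    nlinarith only [sq_nonneg (q1 * (2 * B01) - q2 * (B00 - B11))]
  have h3 : (B00 - B11) ^ 2 + (2 * B01) ^ 2 ≤ (B00 + B11) ^ 2 := by nlinarith only [hGram, hB00n, hB11n]
  have h4 : QB ^ 2 ≤ (q1 ^ 2 + q2 ^ 2) * (B00 + B11) ^ 2 := by
    nlinarith only [hCS2, h3, sq_nonneg q1, sq_nonneg q2]
  have h5 : (3 * (L4 * QB)) ^ 2 ≤ (ζ * (B00 + B11)) ^ 2 := by
    nlinarith only [mul_le_mul_of_nonneg_left h4 (show (0:ℝ) ≤ 9 * L4 ^ 2 by positivity),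
      mul_le_mul_of_nonneg_right hqb (sq_nonneg (B00 + B11))]
  have htrBnn : 0 ≤ ζ * (B00 + B11) := by
    apply mul_nonneg (le_of_lt hζ); linarith
  have hgrad : -(2 * ζ) * (B00 + B11) - 6 * L4 * QB ≤ 0 := by
    nlinarith only [h5, htrBnn, sq_nonneg (ζ * (B00 + B11) + 3 * (L4 * QB))]
  clear hGram hCS2 h3 h4 hLq h9 hdet hH hQBd hB00d hB11d hB01d hLq1 hLq2 hmd
  have hac : -2 * a * m - 2 * c * m ^ 2 < 0 := by
    nlinarith only [mul_pos (mul_pos hc hm0) (sub_pos.2 hm1),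
      mul_le_mul_of_nonneg_right haL (le_of_lt hm0)]
  linarith only [hdt, hE, hgrad, hac]



lemma fnorm_eq (M : Matrix (Fin 2) (Fin 2) ℝ) :
    fnorm M = Real.sqrt (M 0 0 ^ 2 + M 0 1 ^ 2 + M 1 0 ^ 2 + M 1 1 ^ 2) := by
  unfold fnorm
  congr 1
  simp [Fin.sum_univ_two]
  ring

section cpt
variable {Ω : Set E2} (hΩo : IsOpen Ω) (hΩb : Bornology.IsBounded Ω)
  {T : ℝ} (hT : 0 < T) {F : ℝ × E2 → ℝ}
  (hFc : ContinuousOn F (Icc 0 T ×ˢ closure Ω))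

include hΩo hΩb hT hFc in
/-- first-touching-time extraction -/
lemma touching {m : ℝ}
    (hinit : ∀ y ∈ closure Ω, F (0, y) < m)
    (hfront : ∀ s ∈ Icc 0 T, ∀ y ∈ frontier Ω, F (s, y) < m)
    {t1 : ℝ} {x1 : E2} (ht1 : t1 ∈ Ioo 0 T) (hx1 : x1 ∈ closure Ω)
    (hge : m ≤ F (t1, x1)) :
    ∃ t₀ ∈ Ioo 0 T, ∃ x0 ∈ Ω, F (t₀, x0) = m ∧
      (∀ y ∈ closure Ω, F (t₀, y) ≤ m) ∧
      (∀ s ∈ Icc 0 t₀, F (s, x0) ≤ m) := by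
  have hclK : IsCompact (closure Ω) :=
    Metric.isCompact_of_isClosed_isBounded isClosed_closure hΩb.closure
  have hsub : Icc (0:ℝ) t1 ×ˢ closure Ω ⊆ Icc 0 T ×ˢ closure Ω := by
    apply Set.prod_mono_left
    exact Icc_subset_Icc le_rfl (le_of_lt ht1.2)
  have hK'c : IsCompact (Icc (0:ℝ) t1 ×ˢ closure Ω) := isCompact_Icc.prod hclK
  have hFK' : ContinuousOn F (Icc 0 t1 ×ˢ closure Ω) := hFc.mono hsub
  set G : Set (ℝ × E2) := (Icc 0 t1 ×ˢ closure Ω) ∩ F ⁻¹' (Ici m) with hG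
  have hGclosed : IsClosed G :=
    hFK'.preimage_isClosed_of_isClosed (isClosed_Icc.prod isClosed_closure) isClosed_Ici
  have hGcpt : IsCompact G := hK'c.of_isClosed_subset hGclosed inter_subset_left
  have hGne : G.Nonempty := ⟨(t1, x1), ⟨⟨le_of_lt ht1.1, le_rfl⟩, hx1⟩, hge⟩
  have hIcpt : IsCompact (Prod.fst '' G) := hGcpt.image continuous_fst
  have hIne : (Prod.fst '' G).Nonempty := hGne.image _
  obtain ⟨p0, hp0G, hp0t⟩ := hIcpt.sInf_mem hIne
  set t₀ : ℝ := sInf (Prod.fst '' G) with ht₀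
  set x0 : E2 := p0.2 with hx0
  have hp0 : (t₀, x0) ∈ G := by
    rw [← hp0t]
    exact hp0G
  have htle : ∀ p ∈ G, t₀ ≤ p.1 := fun p hp =>
    csInf_le hIcpt.bddBelow (mem_image_of_mem _ hp)
  have ht₀mem : t₀ ∈ Icc 0 t1 := hp0.1.1
  have hx0cl : x0 ∈ closure Ω := hp0.1.2
  have hFt₀ : m ≤ F (t₀, x0) := hp0.2
  have ht₀pos : 0 < t₀ := by
    rcases lt_or_eq_of_le ht₀mem.1 with h | h
    · exact h
    · exfalso
      have := hinit x0 hx0cl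
      rw [← h] at hFt₀
      linarith
  have ht₀T : t₀ < T := lt_of_le_of_lt ht₀mem.2 ht1.2
  have hbefore : ∀ s, 0 ≤ s → s < t₀ → ∀ y ∈ closure Ω, F (s, y) < m := by
    intro s hs0 hst y hy
    by_contra hcon
    push_neg at hcon
    have : (s, y) ∈ G := ⟨⟨⟨hs0, le_trans (le_of_lt hst) ht₀mem.2⟩, hy⟩, hcon⟩
    have := htle _ this
    simp only at this
    linarith
  have hupto : ∀ y ∈ closure Ω, F (t₀, y) ≤ m := by
    intro y hy
    have hslice : ContinuousWithinAt (fun s => F (s, y)) (Icc 0 T) t₀ := by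
      have hmap : MapsTo (fun s : ℝ => (s, y)) (Icc 0 T) (Icc 0 T ×ˢ closure Ω) :=
        fun s hs => ⟨hs, hy⟩
      exact (hFc.comp ((continuous_id.prodMk continuous_const).continuousOn) hmap) t₀
        ⟨le_of_lt ht₀pos, le_of_lt ht₀T⟩
    have hne : (𝓝[Ico 0 t₀] t₀).NeBot := by
      rw [← mem_closure_iff_nhdsWithin_neBot, closure_Ico (ne_of_lt ht₀pos)]
      exact ⟨le_of_lt ht₀pos, le_rfl⟩
    have htend : Tendsto (fun s => F (s, y)) (𝓝[Ico 0 t₀] t₀) (𝓝 (F (t₀, y))) :=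
      hslice.tendsto.mono_left (nhdsWithin_mono _
        (fun s hs => ⟨hs.1, le_trans (le_of_lt hs.2) (le_of_lt ht₀T)⟩))
    refine le_of_tendsto htend ?_
    filter_upwards [self_mem_nhdsWithin] with s hs
    exact le_of_lt (hbefore s hs.1 hs.2 y hy)
  have hx0Ω : x0 ∈ Ω := by
    by_contra hcon
    have hfr : x0 ∈ frontier Ω := by
      rw [frontier, hΩo.interior_eq]
      exact ⟨hx0cl, hcon⟩
    have := hfront t₀ ⟨le_of_lt ht₀pos, le_of_lt ht₀T⟩ x0 hfr
    linarith
  refine ⟨t₀, ⟨ht₀pos, ht₀T⟩, x0, hx0Ω, le_antisymm (hupto x0 hx0cl) hFt₀, hupto, ?_⟩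
  intro s hs
  rcases lt_or_eq_of_le hs.2 with h | h
  · exact le_of_lt (lt_of_lt_of_le (hbefore s hs.1 h x0 hx0cl) (le_refl m)) |>.trans le_rfl
  · rw [h]
    exact hupto x0 hx0cl

end cpt
end LdGaux

/-- preservation of `L^∞` smallness, Proposition 2.1.
For a smooth solution of the 2D Landau–de Gennes gradient flow on a bounded
domain with time-independent boundary data, if the initial data is smaller than
`√(2η₁)` in `L^∞` (and dominates the boundary data) and `|a| ≤ 2cη₁`, then the
solution stays bounded by `√(2η₁)` for all time. -/
theorem preservation_of_smallness
    (Ω : Set E2) (hΩo : IsOpen Ω) (hΩb : Bornology.IsBounded Ω)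
    (a c L1 L2 L3 L4 T : ℝ) (hc : 0 < c) (hL4 : L4 ≠ 0)
    (h12 : 0 < L1 + L2) (h13 : 0 < L1 + L3) (hT : 0 < T)
    (ζ η₁ : ℝ) (hζ : ζ = 2 * L1 + L2 + L3)
    (hη₁ : η₁ = ζ ^ 2 / ((1 + 4 * Real.sqrt 2) ^ 2 * L4 ^ 2))
    (Q : ℝ → E2 → Matrix (Fin 2) (Fin 2) ℝ)
    -- `Q` is continuous on `[0,T] × closure Ω`
    (hQcont : ContinuousOn (fun p : ℝ × E2 => Q p.1 p.2) (Icc 0 T ×ˢ closure Ω))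
    -- `Q` takes values in `S^(2)` (symmetric traceless)
    (hQsymm : ∀ t ∈ Icc (0:ℝ) T, ∀ x ∈ closure Ω, (Q t x).IsSymm)
    (hQtr : ∀ t ∈ Icc (0:ℝ) T, ∀ x ∈ closure Ω, (Q t x).trace = 0)
    -- `Q` is C¹ in `t` and C² in `x` on `(0,T) × Ω`
    (hQt : ∀ x ∈ Ω, ∀ i j : Fin 2, ContDiffOn ℝ 1 (fun s => Q s x i j) (Ioo 0 T))
    (hQx : ∀ t ∈ Ioo (0:ℝ) T, ∀ i j : Fin 2, ContDiffOn ℝ 2 (fun y => Q t y i j) Ω)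
    -- `Q` solves the gradient-flow system on `(0,T) × Ω`
    (hsol : ∀ t ∈ Ioo (0:ℝ) T, ∀ x ∈ Ω, LdGeq a c L1 L2 L3 L4 Q t x)
    -- time-independent Dirichlet boundary condition `Q̃ = Q(0,·)|_{∂Ω}`
    (hbc : ∀ t ∈ Icc (0:ℝ) T, ∀ x ∈ frontier Ω, Q t x = Q 0 x)
    -- smallness of the initial and boundary data
    (hsmall₁ : sSup ((fun x => fnorm (Q 0 x)) '' frontier Ω)
        ≤ sSup ((fun x => fnorm (Q 0 x)) '' Ω))
    (hsmall₂ : sSup ((fun x => fnorm (Q 0 x)) '' Ω) < Real.sqrt (2 * η₁))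
    -- smallness of the coefficient `a`
    (ha : |a| ≤ 2 * c * η₁) :
    ∀ t ∈ Ioo (0:ℝ) T, ∀ x ∈ Ω, fnorm (Q t x) ≤ Real.sqrt (2 * η₁) := by
  classical
  have hζpos : 0 < ζ := by rw [hζ]; linarith
  have hL42 : (0:ℝ) < L4 ^ 2 := by positivity
  have hη₁pos : 0 < η₁ := by
    rw [hη₁]
    have h2 : (0:ℝ) < 1 + 4 * Real.sqrt 2 := by positivity
    positivity
  have htIccT : ∀ {s : ℝ}, s ∈ Ioo 0 T → s ∈ Icc 0 T :=
    fun hs => ⟨le_of_lt hs.1, le_of_lt hs.2⟩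
  -- continuity of the squared norm
  have hent : ∀ i j : Fin 2, ContinuousOn (fun p : ℝ × E2 => Q p.1 p.2 i j)
      (Icc 0 T ×ˢ closure Ω) := by
    intro i j
    exact ((continuous_apply j).comp (continuous_apply i)).comp_continuousOn hQcont
  have hFc : ContinuousOn
      (fun p : ℝ × E2 => Q p.1 p.2 0 0 ^ 2 + Q p.1 p.2 0 1 ^ 2
        + Q p.1 p.2 1 0 ^ 2 + Q p.1 p.2 1 1 ^ 2) (Icc 0 T ×ˢ closure Ω) := by
    exact ((((hent 0 0).pow 2).add ((hent 0 1).pow 2)).add ((hent 1 0).pow 2)).add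
      ((hent 1 1).pow 2)
  -- initial bound
  have hinit : ∀ y ∈ closure Ω, Q 0 y 0 0 ^ 2 + Q 0 y 0 1 ^ 2
      + Q 0 y 1 0 ^ 2 + Q 0 y 1 1 ^ 2 < 2 * η₁ := by
    have hQ0c : ContinuousOn (fun x : E2 => fnorm (Q 0 x)) (closure Ω) := by
      have hmap : MapsTo (fun x : E2 => ((0:ℝ), x)) (closure Ω) (Icc 0 T ×ˢ closure Ω) :=
        fun x hx => ⟨⟨le_rfl, le_of_lt hT⟩, hx⟩
      have hrw : (fun x : E2 => fnorm (Q 0 x))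
          = fun x : E2 => Real.sqrt (Q 0 x 0 0 ^ 2 + Q 0 x 0 1 ^ 2
              + Q 0 x 1 0 ^ 2 + Q 0 x 1 1 ^ 2) := by
        funext x
        exact LdGaux.fnorm_eq _
      rw [hrw]
      apply Real.continuous_sqrt.comp_continuousOn
      have h00 := ((continuous_apply (0:Fin 2)).comp
        (continuous_apply (0:Fin 2))).comp_continuousOn
        (hQcont.comp ((continuous_const.prodMk continuous_id).continuousOn) hmap)
      have h01 := ((continuous_apply (1:Fin 2)).comp
        (continuous_apply (0:Fin 2))).comp_continuousOn
        (hQcont.comp ((continuous_const.prodMk continuous_id).continuousOn) hmap)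
      have h10 := ((continuous_apply (0:Fin 2)).comp
        (continuous_apply (1:Fin 2))).comp_continuousOn
        (hQcont.comp ((continuous_const.prodMk continuous_id).continuousOn) hmap)
      have h11 := ((continuous_apply (1:Fin 2)).comp
        (continuous_apply (1:Fin 2))).comp_continuousOn
        (hQcont.comp ((continuous_const.prodMk continuous_id).continuousOn) hmap)
      exact (((h00.pow 2).add (h01.pow 2)).add (h10.pow 2)).add (h11.pow 2)
    have hcpt : IsCompact (closure Ω) :=
      Metric.isCompact_of_isClosed_isBounded isClosed_closure hΩb.closure
    have himg : IsCompact ((fun x : E2 => fnorm (Q 0 x)) '' closure Ω) :=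
      hcpt.image_of_continuousOn hQ0c
    have hbdd : BddAbove ((fun x : E2 => fnorm (Q 0 x)) '' Ω) :=
      himg.bddAbove.mono (image_mono subset_closure)
    intro y hy
    have hyS : fnorm (Q 0 y) ≤ sSup ((fun x : E2 => fnorm (Q 0 x)) '' Ω) := by
      have h1 : fnorm (Q 0 y) ∈ closure ((fun x : E2 => fnorm (Q 0 x)) '' Ω) :=
        hQ0c.image_closure (mem_image_of_mem _ hy)
      have h2 : closure ((fun x : E2 => fnorm (Q 0 x)) '' Ω)
          ⊆ Iic (sSup ((fun x : E2 => fnorm (Q 0 x)) '' Ω)) :=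
        closure_minimal (fun r hr => le_csSup hbdd hr) isClosed_Iic
      exact h2 h1
    have h1 : fnorm (Q 0 y) < Real.sqrt (2 * η₁) := lt_of_le_of_lt hyS hsmall₂
    have hnn : 0 ≤ fnorm (Q 0 y) := Real.sqrt_nonneg _
    have h2 : fnorm (Q 0 y) ^ 2 < Real.sqrt (2 * η₁) ^ 2 := by
      apply pow_lt_pow_left₀ h1 hnn
      norm_num
    have h3 : Real.sqrt (2 * η₁) ^ 2 = 2 * η₁ := Real.sq_sqrt (by linarith)
    have h4 : fnorm (Q 0 y) ^ 2 = Q 0 y 0 0 ^ 2 + Q 0 y 0 1 ^ 2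
        + Q 0 y 1 0 ^ 2 + Q 0 y 1 1 ^ 2 := by
      rw [LdGaux.fnorm_eq]
      exact Real.sq_sqrt (by positivity)
    linarith
  -- the key claim
  have key : ∀ m : ℝ, 2 * η₁ < m → m ≤ 2 * ζ ^ 2 / (9 * L4 ^ 2) →
      ∀ s ∈ Ioo (0:ℝ) T, ∀ y ∈ closure Ω,
        Q s y 0 0 ^ 2 + Q s y 0 1 ^ 2 + Q s y 1 0 ^ 2 + Q s y 1 1 ^ 2 < m := by
    intro m hm1 hm2 s hs y hy
    by_contra hcon
    push_neg at hcon
    obtain ⟨t₀, ht₀, x0, hx0, heq, hup, htm⟩ :=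
      LdGaux.touching hΩo hΩb hT hFc
        (fun y hy => hinit y hy |>.trans_le (le_of_lt hm1))
        (by
          intro s' hs' y' hy'
          have hQb : Q s' y' = Q 0 y' := hbc s' hs' y' hy'
          show Q s' y' 0 0 ^ 2 + Q s' y' 0 1 ^ 2 + Q s' y' 1 0 ^ 2 + Q s' y' 1 1 ^ 2 < m
          rw [hQb]
          exact (hinit y' (frontier_subset_closure hy')).trans hm1)
        hs hy hcon
    have htIcc : t₀ ∈ Icc (0:ℝ) T := htIccT ht₀
    -- C² slices
    have hC00 := hQx t₀ ht₀ 0 0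
    have hC01 := hQx t₀ ht₀ 0 1
    have hC10 := hQx t₀ ht₀ 1 0
    have hC11 := hQx t₀ ht₀ 1 1
    -- pointwise algebraic relations on Ω
    have hsym : ∀ y' ∈ Ω, Q t₀ y' 1 0 = Q t₀ y' 0 1 := by
      intro y' hy'
      exact (hQsymm t₀ htIcc y' (subset_closure hy')).apply 0 1
    have htr : ∀ y' ∈ Ω, Q t₀ y' 1 1 = -Q t₀ y' 0 0 := by
      intro y' hy'
      have := hQtr t₀ htIcc y' (subset_closure hy')
      rw [Matrix.trace_fin_two] at this
      linarith
    -- derivative relations at x0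
    have hq10 : Q t₀ x0 1 0 = Q t₀ x0 0 1 := hsym x0 hx0
    have hq11 : Q t₀ x0 1 1 = -Q t₀ x0 0 0 := htr x0 hx0
    have hp10 : ∀ k, pd k (fun y' => Q t₀ y' 1 0) x0 = pd k (fun y' => Q t₀ y' 0 1) x0 :=
      fun k => LdGaux.pd_congr hΩo hx0 hsym k
    have hp11 : ∀ k, pd k (fun y' => Q t₀ y' 1 1) x0 = -pd k (fun y' => Q t₀ y' 0 0) x0 :=
      fun k => LdGaux.pd_congr_neg hΩo hx0 htr k
    have hpp10 : ∀ l k, pd2 l k (fun y' => Q t₀ y' 1 0) x0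
        = pd2 l k (fun y' => Q t₀ y' 0 1) x0 :=
      fun l k => LdGaux.pd2_congr_eq hΩo hx0 hsym l k
    have hpp11 : ∀ l k, pd2 l k (fun y' => Q t₀ y' 1 1) x0
        = -pd2 l k (fun y' => Q t₀ y' 0 0) x0 :=
      fun l k => LdGaux.pd2_congr_neg hΩo hx0 htr l k
    have hsch00 : pd2 1 0 (fun y' => Q t₀ y' 0 0) x0 = pd2 0 1 (fun y' => Q t₀ y' 0 0) x0 :=
      LdGaux.pd2_symm hΩo hx0 hC00 1 0
    have hsch01 : pd2 1 0 (fun y' => Q t₀ y' 0 1) x0 = pd2 0 1 (fun y' => Q t₀ y' 0 1) x0 :=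
      LdGaux.pd2_symm hΩo hx0 hC01 1 0
    -- spatial maximum
    have hsmax : ∀ y' ∈ Ω, Q t₀ y' 0 0 ^ 2 + Q t₀ y' 0 1 ^ 2 + Q t₀ y' 1 0 ^ 2
        + Q t₀ y' 1 1 ^ 2 ≤ Q t₀ x0 0 0 ^ 2 + Q t₀ x0 0 1 ^ 2 + Q t₀ x0 1 0 ^ 2
        + Q t₀ x0 1 1 ^ 2 := by
      intro y' hy'
      exact le_trans (hup y' (subset_closure hy')) (le_of_eq heq.symm)
    -- differentiability at x0
    have hd00 : DifferentiableAt ℝ (fun y' => Q t₀ y' 0 0) x0 :=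
      LdGaux.diffAt_of_contDiffOn hΩo hx0 (n := 1) hC00
    have hd01 : DifferentiableAt ℝ (fun y' => Q t₀ y' 0 1) x0 :=
      LdGaux.diffAt_of_contDiffOn hΩo hx0 (n := 1) hC01
    have hd10 : DifferentiableAt ℝ (fun y' => Q t₀ y' 1 0) x0 :=
      LdGaux.diffAt_of_contDiffOn hΩo hx0 (n := 1) hC10
    have hd11 : DifferentiableAt ℝ (fun y' => Q t₀ y' 1 1) x0 :=
      LdGaux.diffAt_of_contDiffOn hΩo hx0 (n := 1) hC11
    -- gradient of the squared norm vanishes at x0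
    have hgz : ∀ k, 2 * Q t₀ x0 0 0 * pd k (fun y' => Q t₀ y' 0 0) x0
        + 2 * Q t₀ x0 0 1 * pd k (fun y' => Q t₀ y' 0 1) x0
        + 2 * Q t₀ x0 1 0 * pd k (fun y' => Q t₀ y' 1 0) x0
        + 2 * Q t₀ x0 1 1 * pd k (fun y' => Q t₀ y' 1 1) x0 = 0 := by
      intro k
      have h1 : pd k (fun z => Q t₀ z 0 0 ^ 2 + Q t₀ z 0 1 ^ 2 + Q t₀ z 1 0 ^ 2
          + Q t₀ z 1 1 ^ 2) x0 = 0 := LdGaux.grad_zero hΩo hx0 hsmax k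
      have h2 : pd k (fun z => Q t₀ z 0 0 ^ 2 + Q t₀ z 0 1 ^ 2 + Q t₀ z 1 0 ^ 2
          + Q t₀ z 1 1 ^ 2) x0
          = 2 * Q t₀ x0 0 0 * pd k (fun y' => Q t₀ y' 0 0) x0
          + 2 * Q t₀ x0 0 1 * pd k (fun y' => Q t₀ y' 0 1) x0
          + 2 * Q t₀ x0 1 0 * pd k (fun y' => Q t₀ y' 1 0) x0
          + 2 * Q t₀ x0 1 1 * pd k (fun y' => Q t₀ y' 1 1) x0 :=
        LdGaux.pd_sumsq hd00 hd01 hd10 hd11 k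
      rw [h2] at h1
      exact h1
    -- the quadratic form of second derivatives is nonpositive
    have hC2sum : ContDiffOn ℝ 2 (fun z => Q t₀ z 0 0 ^ 2 + Q t₀ z 0 1 ^ 2
        + Q t₀ z 1 0 ^ 2 + Q t₀ z 1 1 ^ 2) Ω := by
      exact (((hC00.pow 2).add (hC01.pow 2)).add (hC10.pow 2)).add (hC11.pow 2)
    have hquad := LdGaux.quadform_nonpos hΩo hx0 hC2sum hsmax
    have hPsum : ∀ l k, pd2 l k (fun z => Q t₀ z 0 0 ^ 2 + Q t₀ z 0 1 ^ 2
        + Q t₀ z 1 0 ^ 2 + Q t₀ z 1 1 ^ 2) x0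
        = 2 * (pd l (fun y' => Q t₀ y' 0 0) x0 * pd k (fun y' => Q t₀ y' 0 0) x0
            + Q t₀ x0 0 0 * pd2 l k (fun y' => Q t₀ y' 0 0) x0)
        + 2 * (pd l (fun y' => Q t₀ y' 0 1) x0 * pd k (fun y' => Q t₀ y' 0 1) x0
            + Q t₀ x0 0 1 * pd2 l k (fun y' => Q t₀ y' 0 1) x0)
        + 2 * (pd l (fun y' => Q t₀ y' 1 0) x0 * pd k (fun y' => Q t₀ y' 1 0) x0
            + Q t₀ x0 1 0 * pd2 l k (fun y' => Q t₀ y' 1 0) x0)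
        + 2 * (pd l (fun y' => Q t₀ y' 1 1) x0 * pd k (fun y' => Q t₀ y' 1 1) x0
            + Q t₀ x0 1 1 * pd2 l k (fun y' => Q t₀ y' 1 1) x0) :=
      fun l k => LdGaux.pd2_sumsq hΩo hx0 hC00 hC01 hC10 hC11 l k
    -- time derivative
    have hdiffT : ∀ i j : Fin 2, DifferentiableAt ℝ (fun s' => Q s' x0 i j) t₀ :=
      fun i j => ((hQt x0 hx0 i j).differentiableOn one_ne_zero).differentiableAt
        (isOpen_Ioo.mem_nhds ht₀)
    have hT1 : HasDerivAt (fun s' => Q s' x0 0 0 ^ 2 + Q s' x0 0 1 ^ 2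
        + Q s' x0 1 0 ^ 2 + Q s' x0 1 1 ^ 2)
        (2 * Q t₀ x0 0 0 * deriv (fun s' => Q s' x0 0 0) t₀
          + 2 * Q t₀ x0 0 1 * deriv (fun s' => Q s' x0 0 1) t₀
          + 2 * Q t₀ x0 1 0 * deriv (fun s' => Q s' x0 1 0) t₀
          + 2 * Q t₀ x0 1 1 * deriv (fun s' => Q s' x0 1 1) t₀) t₀ :=
      LdGaux.hasDerivAt_sumsq_time (hdiffT 0 0) (hdiffT 0 1) (hdiffT 1 0) (hdiffT 1 1)
    have hmaxT : ∀ s' ∈ Icc (0:ℝ) t₀, Q s' x0 0 0 ^ 2 + Q s' x0 0 1 ^ 2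
        + Q s' x0 1 0 ^ 2 + Q s' x0 1 1 ^ 2 ≤ Q t₀ x0 0 0 ^ 2 + Q t₀ x0 0 1 ^ 2
        + Q t₀ x0 1 0 ^ 2 + Q t₀ x0 1 1 ^ 2 :=
      fun s' hs' => le_trans (htm s' hs') (le_of_eq heq.symm)
    have hd0 : 0 ≤ 2 * Q t₀ x0 0 0 * deriv (fun s' => Q s' x0 0 0) t₀
        + 2 * Q t₀ x0 0 1 * deriv (fun s' => Q s' x0 0 1) t₀
        + 2 * Q t₀ x0 1 0 * deriv (fun s' => Q s' x0 1 0) t₀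
        + 2 * Q t₀ x0 1 1 * deriv (fun s' => Q s' x0 1 1) t₀ :=
      LdGaux.deriv_nonneg_of_left_max hT1 ht₀.1 hmaxT
    -- substitute the PDE
    have hS00 := hsol t₀ ht₀ x0 hx0 0 0
    have hS01 := hsol t₀ ht₀ x0 hx0 0 1
    have hS10 := hsol t₀ ht₀ x0 hx0 1 0
    have hS11 := hsol t₀ ht₀ x0 hx0 1 1
    rw [hS00, hS01, hS10, hS11] at hd0
    simp only [Fin.sum_univ_two, Matrix.trace_fin_two, Matrix.mul_apply, reduceIte,
      Fin.isValue] at hd0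
    simp only [if_neg (by decide : ¬((0:Fin 2) = 1)), if_neg (by decide : ¬((1:Fin 2) = 0)),
      mul_zero, mul_one, add_zero, sub_zero] at hd0
    simp only [hq10, hq11, hp10, hp11, hpp10, hpp11, hsch00, hsch01] at hd0
    -- rewrite the max facts in terms of the basic quantities
    have hFeq : Q t₀ x0 0 0 ^ 2 + Q t₀ x0 0 1 ^ 2 + Q t₀ x0 1 0 ^ 2
        + Q t₀ x0 1 1 ^ 2 = m := heq
    rw [hq10, hq11] at hFeq
    have hgz0 := hgz 0
    have hgz1 := hgz 1
    rw [hq10, hq11, hp10, hp11] at hgz0 hgz1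
    -- abbreviate
    obtain ⟨q1, hq1v⟩ : ∃ r, Q t₀ x0 0 0 = r := ⟨_, rfl⟩
    obtain ⟨q2, hq2v⟩ : ∃ r, Q t₀ x0 0 1 = r := ⟨_, rfl⟩
    obtain ⟨p01, hp01v⟩ : ∃ r, pd 0 (fun y' => Q t₀ y' 0 0) x0 = r := ⟨_, rfl⟩
    obtain ⟨p02, hp02v⟩ : ∃ r, pd 0 (fun y' => Q t₀ y' 0 1) x0 = r := ⟨_, rfl⟩
    obtain ⟨p11, hp11v⟩ : ∃ r, pd 1 (fun y' => Q t₀ y' 0 0) x0 = r := ⟨_, rfl⟩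
    obtain ⟨p12, hp12v⟩ : ∃ r, pd 1 (fun y' => Q t₀ y' 0 1) x0 = r := ⟨_, rfl⟩
    obtain ⟨s001, hs001v⟩ : ∃ r, pd2 0 0 (fun y' => Q t₀ y' 0 0) x0 = r := ⟨_, rfl⟩
    obtain ⟨s002, hs002v⟩ : ∃ r, pd2 0 0 (fun y' => Q t₀ y' 0 1) x0 = r := ⟨_, rfl⟩
    obtain ⟨s011, hs011v⟩ : ∃ r, pd2 0 1 (fun y' => Q t₀ y' 0 0) x0 = r := ⟨_, rfl⟩
    obtain ⟨s012, hs012v⟩ : ∃ r, pd2 0 1 (fun y' => Q t₀ y' 0 1) x0 = r := ⟨_, rfl⟩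
    obtain ⟨s111, hs111v⟩ : ∃ r, pd2 1 1 (fun y' => Q t₀ y' 0 0) x0 = r := ⟨_, rfl⟩
    obtain ⟨s112, hs112v⟩ : ∃ r, pd2 1 1 (fun y' => Q t₀ y' 0 1) x0 = r := ⟨_, rfl⟩
    simp only [hq1v, hq2v, hp01v, hp02v, hp11v, hp12v, hs001v, hs002v, hs011v, hs012v,
      hs111v, hs112v] at hd0 hFeq hgz0 hgz1
    -- hypotheses of the final algebraic lemma
    have hm1' : 2 * η₁ < 2 * (q1 ^ 2 + q2 ^ 2) := by nlinarith only [hFeq, hm1]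
    have hm2' : 2 * (q1 ^ 2 + q2 ^ 2) ≤ 2 * ζ ^ 2 / (9 * L4 ^ 2) := by
      nlinarith only [hFeq, hm2]
    have hg0 : q1 * p01 + q2 * p02 = 0 := by nlinarith only [hgz0]
    have hg1 : q1 * p11 + q2 * p12 = 0 := by nlinarith only [hgz1]
    have hHq : ∀ v1 v2 : ℝ,
        v1 ^ 2 * (4 * (p01 ^ 2 + p02 ^ 2 + q1 * s001 + q2 * s002))
        + v1 * v2 * (2 * (4 * (p01 * p11 + p02 * p12 + q1 * s011 + q2 * s012)))
        + v2 ^ 2 * (4 * (p11 ^ 2 + p12 ^ 2 + q1 * s111 + q2 * s112)) ≤ 0 := by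
      intro v1 v2
      have h1 := hquad v1 v2
      rw [hPsum 0 0, hPsum 0 1, hPsum 1 0, hPsum 1 1] at h1
      simp only [hq10, hq11, hp10, hp11, hpp10, hpp11, hsch00, hsch01] at h1
      simp only [hq1v, hq2v, hp01v, hp02v, hp11v, hp12v, hs001v, hs002v, hs011v,
        hs012v, hs111v, hs112v] at h1
      nlinarith only [h1]
    have hdt' : 0 ≤ 2 * ((ζ / 2 + L4 * q1) * (4 * (p01 ^ 2 + p02 ^ 2 + q1 * s001 + q2 * s002))
          + 2 * (L4 * q2) * (4 * (p01 * p11 + p02 * p12 + q1 * s011 + q2 * s012))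
          + (ζ / 2 - L4 * q1) * (4 * (p11 ^ 2 + p12 ^ 2 + q1 * s111 + q2 * s112)))
        - 2 * ζ * (2 * (p01 ^ 2 + p02 ^ 2) + 2 * (p11 ^ 2 + p12 ^ 2))
        - 6 * L4 * (q1 * (2 * (p01 ^ 2 + p02 ^ 2) - 2 * (p11 ^ 2 + p12 ^ 2))
            + 2 * q2 * (2 * (p01 * p11 + p02 * p12)))
        - 2 * a * (2 * (q1 ^ 2 + q2 ^ 2)) - 2 * c * (2 * (q1 ^ 2 + q2 ^ 2)) ^ 2
        + 8 * L4 * ((q1 * p01 + q2 * p02) * (p01 + p12)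
            + (q1 * p11 + q2 * p12) * (p02 - p11)) := by
      rw [hζ]
      linarith only [hd0]
    exact LdGaux.final_algebra a c L4 ζ η₁ q1 q2 p01 p02 p11 p12 s001 s002 s011 s012
      s111 s112 hc hζpos hL4 hη₁ hm1' hm2' ha hg0 hg1 hHq hdt'
  -- conclusion
  intro t ht x hx
  have hgap : 2 * η₁ < 2 * ζ ^ 2 / (9 * L4 ^ 2) := by
    rw [hη₁]
    have hs2 : (1:ℝ) ≤ Real.sqrt 2 := by
      rw [show (1:ℝ) = Real.sqrt 1 by simp]
      exact Real.sqrt_le_sqrt (by norm_num)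
    have hden : (9:ℝ) * L4 ^ 2 < (1 + 4 * Real.sqrt 2) ^ 2 * L4 ^ 2 := by
      have h25 : (25:ℝ) ≤ (1 + 4 * Real.sqrt 2) ^ 2 := by nlinarith only [hs2]
      nlinarith only [h25, hL42]
    have := div_lt_div_of_pos_left (show (0:ℝ) < ζ ^ 2 by positivity)
      (show (0:ℝ) < 9 * L4 ^ 2 by positivity) hden
    calc 2 * (ζ ^ 2 / ((1 + 4 * Real.sqrt 2) ^ 2 * L4 ^ 2))
        < 2 * (ζ ^ 2 / (9 * L4 ^ 2)) := by linarith
      _ = 2 * ζ ^ 2 / (9 * L4 ^ 2) := by ring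
  have hF2 : Q t x 0 0 ^ 2 + Q t x 0 1 ^ 2 + Q t x 1 0 ^ 2 + Q t x 1 1 ^ 2 ≤ 2 * η₁ := by
    by_contra hcon
    push_neg at hcon
    set v : ℝ := Q t x 0 0 ^ 2 + Q t x 0 1 ^ 2 + Q t x 1 0 ^ 2 + Q t x 1 1 ^ 2 with hv
    have hmin : 2 * η₁ < min (2 * ζ ^ 2 / (9 * L4 ^ 2)) v := lt_min hgap hcon
    have := key (min (2 * ζ ^ 2 / (9 * L4 ^ 2)) v) hmin (min_le_left _ _) t ht x
      (subset_closure hx)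
    have h2 := min_le_right (2 * ζ ^ 2 / (9 * L4 ^ 2)) v
    rw [← hv] at this
    linarith
  rw [LdGaux.fnorm_eq]
  rw [show (2 * η₁ : ℝ) = Real.sqrt (2 * η₁) ^ 2 from (Real.sq_sqrt (by linarith)).symm] at hF2
  have := Real.sqrt_le_sqrt hF2
  rwa [Real.sqrt_sq (Real.sqrt_nonneg _)] at this

end
end

section
/- Let 0 < R0 < R1 and let g : [R0,R1] → ℝ be continuously differentiable with g ≥ 0 and g(R0) = g(R1) = 0. Then ∫_{R0}^{R1} g'(r)² g(r) dr ≥ (4π² / (9 (R1 − R0)²)) ∫_{R0}^{R1} g(r)³ dr. -/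
open MeasureTheory Set intervalIntegral Filter Topology

private lemma alg1 (A e co s : ℝ) (he : e ≠ 0) (hs : s ≠ 0) :
    (A / e) ^ 3 * (e ^ 3 * co / s) = A ^ 3 * co / s := by
  field_simp

private lemma alg2 (A e co s : ℝ) (he : e ≠ 0) (hs : s ≠ 0) :
    (A / (-e)) ^ 3 * (e ^ 3 * co / s) = A ^ 3 * -co / s := by
  have h1 := alg1 A e co s he hs
  calc (A / (-e)) ^ 3 * (e ^ 3 * co / s)
      = -((A / e) ^ 3 * (e ^ 3 * co / s)) := by ring
    _ = -(A ^ 3 * co / s) := by rw [h1]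
    _ = A ^ 3 * -co / s := by ring

private lemma alg3 (e co s c : ℝ) (he : e ≠ 0) (hs : s ≠ 0) (hc : c ≠ 0) :
    e ^ 2 * co * (s / (c * e))⁻¹ / c = e ^ 3 * co / s := by
  field_simp

private lemma poincare_cubed_aux
    (a b : ℝ) (hab : a < b)
    (g g' : ℝ → ℝ)
    (hderiv : ∀ r ∈ Icc a b, HasDerivWithinAt g (g' r) (Icc a b) r)
    (hg'cont : ContinuousOn g' (Icc a b))
    (hgpos : ∀ r ∈ Icc a b, 0 ≤ g r)
    (hga : g a = 0) (hgb : g b = 0) :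
    0 ≤ ∫ r in a..b,
      (g' r ^ 2 * g r - 4 * (Real.pi / (b - a)) ^ 2 / 9 * g r ^ 3) := by
  set L := b - a with hLdef
  have hL0 : 0 < L := sub_pos.mpr hab
  set c := Real.pi / L with hcdef
  have hc0 : 0 < c := div_pos Real.pi_pos hL0
  have hcL : c * L = Real.pi := div_mul_cancel₀ _ hL0.ne'
  clear_value L c
  set k := 4 * c ^ 2 / 9 with hkdef
  clear_value k
  have hgcont : ContinuousOn g (Icc a b) := fun x hx => (hderiv x hx).continuousWithinAt
  set h : ℝ → ℝ := fun x => g' x ^ 2 * g x - k * g x ^ 3 with hhdef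
  clear_value h
  have hhcont : ContinuousOn h (Icc a b) := by
    rw [hhdef]
    exact (((hg'cont.pow 2).mul hgcont).sub (continuousOn_const.mul (hgcont.pow 3)))
  have huIcc : uIcc a b = Icc a b := uIcc_of_le hab.le
  have hhint : IntervalIntegrable h volume a b :=
    (huIcc ▸ hhcont : ContinuousOn h (uIcc a b)).intervalIntegrable
  set F : ℝ → ℝ := fun x => g x ^ 3 * Real.cos (c * (x - a)) / Real.sin (c * (x - a))
    with hFdef
  set F' : ℝ → ℝ := fun x =>
      3 * g x ^ 2 * g' x * Real.cos (c * (x - a)) / Real.sin (c * (x - a))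
        - c * g x ^ 3 / Real.sin (c * (x - a)) ^ 2 with hF'def
  clear_value F F'
  -- the key truncated inequality
  have key : ∀ ε ∈ Ioo (0 : ℝ) (L / 2),
      (4 * c / 9) * (F (b - ε) - F (a + ε)) ≤ ∫ r in (a + ε)..(b - ε), h r := by
    rintro ε ⟨hε0, hεL⟩
    have hab' : a + ε < b - ε := by
      have : L = b - a := hLdef
      linarith
    have hsub : Icc (a + ε) (b - ε) ⊆ Icc a b :=
      Icc_subset_Icc (by linarith) (by linarith)
    have hsin : ∀ x ∈ Icc (a + ε) (b - ε), 0 < Real.sin (c * (x - a)) := by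
      intro x hx
      apply Real.sin_pos_of_pos_of_lt_pi
      · exact mul_pos hc0 (by have := hx.1; linarith)
      · have hxa : x - a < L := by have := hx.2; have : L = b - a := hLdef; linarith [hx.2]
        calc c * (x - a) < c * L := by exact (mul_lt_mul_iff_right₀ hc0).mpr hxa
          _ = Real.pi := hcL
    have hFderiv : ∀ x ∈ Icc (a + ε) (b - ε), HasDerivAt F (F' x) x := by
      intro x hx
      have hx' := hsub hx
      have hmem : Icc a b ∈ 𝓝 x :=
        Icc_mem_nhds (lt_of_lt_of_le (by linarith [hx.1] : a < a + ε) hx.1)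
          (lt_of_le_of_lt hx.2 (by linarith : b - ε < b))
      have hg : HasDerivAt g (g' x) x := (hderiv x hx').hasDerivAt hmem
      have hθ : HasDerivAt (fun y => c * (y - a)) c x := by
        simpa using ((hasDerivAt_id x).sub_const a).const_mul c
      have hsinθ : HasDerivAt (fun y => Real.sin (c * (y - a)))
          (Real.cos (c * (x - a)) * c) x := hθ.sin
      have hcosθ : HasDerivAt (fun y => Real.cos (c * (y - a)))
          (-Real.sin (c * (x - a)) * c) x := hθ.cos
      have hg3 : HasDerivAt (fun y => g y ^ 3) (3 * g x ^ 2 * g' x) x := by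
        simpa using hg.fun_pow 3
      have hnum : HasDerivAt (fun y => g y ^ 3 * Real.cos (c * (y - a)))
          (3 * g x ^ 2 * g' x * Real.cos (c * (x - a))
            + g x ^ 3 * (-Real.sin (c * (x - a)) * c)) x := hg3.mul hcosθ
      have hs := (hsin x hx).ne'
      have := hnum.fun_div hsinθ hs
      rw [hFdef]
      refine this.congr_deriv ?_; symm
      have hpyth := Real.sin_sq_add_cos_sq (c * (x - a))
      simp only [hF'def]
      field_simp
      linear_combination (c * g x ^ 3) * hpyth
    have hsinc : ContinuousOn (fun x => Real.sin (c * (x - a))) (Icc (a+ε) (b-ε)) :=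
      (Real.continuous_sin.comp ((continuous_const.mul (continuous_id.sub continuous_const)))).continuousOn
    have hcosc : ContinuousOn (fun x => Real.cos (c * (x - a))) (Icc (a+ε) (b-ε)) :=
      (Real.continuous_cos.comp ((continuous_const.mul (continuous_id.sub continuous_const)))).continuousOn
    have hF'cont : ContinuousOn F' (Icc (a + ε) (b - ε)) := by
      rw [hF'def]
      apply ContinuousOn.sub
      · exact ((continuousOn_const.mul ((hgcont.mono hsub).pow 2)).mul
          (hg'cont.mono hsub)).mul hcosc |>.div hsinc (fun x hx => (hsin x hx).ne')
      · exact (continuousOn_const.mul ((hgcont.mono hsub).pow 3)).div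
          (hsinc.pow 2) (fun x hx => (pow_ne_zero 2 (hsin x hx).ne'))
    have huIcc' : uIcc (a + ε) (b - ε) = Icc (a + ε) (b - ε) := uIcc_of_le hab'.le
    have hF'int : IntervalIntegrable F' volume (a + ε) (b - ε) :=
      (huIcc' ▸ hF'cont : ContinuousOn F' (uIcc (a+ε) (b-ε))).intervalIntegrable
    have hftc : ∫ r in (a + ε)..(b - ε), F' r = F (b - ε) - F (a + ε) :=
      intervalIntegral.integral_eq_sub_of_hasDerivAt
        (fun x hx => hFderiv x (huIcc' ▸ hx)) hF'int
    have hhint' : IntervalIntegrable h volume (a + ε) (b - ε) :=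
      hhint.mono_set (by rw [huIcc, huIcc']; exact hsub)
    have hpt : ∀ x ∈ Icc (a + ε) (b - ε), (4 * c / 9) * F' x ≤ h x := by
      intro x hx
      have hgx : 0 ≤ g x := hgpos x (hsub hx)
      have hs : 0 < Real.sin (c * (x - a)) := hsin x hx
      have hsq : Real.sqrt (g x) ^ 2 = g x := Real.sq_sqrt hgx
      obtain ⟨t, ht0, hgt⟩ : ∃ t : ℝ, 0 ≤ t ∧ g x = t ^ 2 :=
        ⟨Real.sqrt (g x), Real.sqrt_nonneg _, hsq.symm⟩
      have key0 : h x - (4 * c / 9) * F' x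
          = (g' x * t
              - (2 * c / 3) * (g x * t)
                * (Real.cos (c * (x - a)) / Real.sin (c * (x - a)))) ^ 2 := by
        have hpyth := Real.sin_sq_add_cos_sq (c * (x - a))
        simp only [hhdef, hF'def, hkdef, hgt]
        field_simp
        linear_combination (-36 * c ^ 2 * t ^ 6) * hpyth
      nlinarith [sq_nonneg (g' x * t
        - (2 * c / 3) * (g x * t)
          * (Real.cos (c * (x - a)) / Real.sin (c * (x - a)))), key0]
    calc (4 * c / 9) * (F (b - ε) - F (a + ε))
        = ∫ r in (a + ε)..(b - ε), (4 * c / 9) * F' r := by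
          rw [intervalIntegral.integral_const_mul, hftc]
      _ ≤ ∫ r in (a + ε)..(b - ε), h r :=
          intervalIntegral.integral_mono_on hab'.le (hF'int.const_mul _) hhint' hpt
  -- the primitive and its continuity
  set P : ℝ → ℝ := fun x => ∫ t in a..x, h t with hPdef
  clear_value P
  have hPcont : ContinuousOn P (Icc a b) := by
    have hio : IntegrableOn h (uIcc a b) volume := by
      rw [huIcc]; exact hhcont.integrableOn_Icc
    rw [hPdef, ← huIcc]
    exact intervalIntegral.continuousOn_primitive_interval hio
  have hIooL : Ioo (0 : ℝ) L ∈ 𝓝[>] (0 : ℝ) :=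
    Ioo_mem_nhdsGT_of_mem ⟨le_refl 0, hL0⟩
  have hIooL2 : Ioo (0 : ℝ) (L / 2) ∈ 𝓝[>] (0 : ℝ) :=
    Ioo_mem_nhdsGT_of_mem ⟨le_refl 0, half_pos hL0⟩
  have hsplit : ∀ᶠ ε in 𝓝[>] (0 : ℝ),
      (∫ r in (a + ε)..(b - ε), h r) = P (b - ε) - P (a + ε) := by
    filter_upwards [hIooL2] with ε hε
    have h1 : IntervalIntegrable h volume a (b - ε) :=
      hhint.mono_set (by
        rw [huIcc, uIcc_of_le (by have : L = b - a := hLdef; linarith [hε.1, hε.2] : a ≤ b - ε)]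
        exact Icc_subset_Icc le_rfl (by linarith [hε.1]))
    have h2 : IntervalIntegrable h volume a (a + ε) :=
      hhint.mono_set (by
        rw [huIcc, uIcc_of_le (by linarith [hε.1] : a ≤ a + ε)]
        exact Icc_subset_Icc le_rfl (by have : L = b - a := hLdef; linarith [hε.2]))
    simp only [hPdef]
    exact (intervalIntegral.integral_interval_sub_left h1 h2).symm
  have htb : Tendsto (fun ε : ℝ => b - ε) (𝓝[>] (0 : ℝ)) (𝓝[Icc a b] b) := by
    apply tendsto_nhdsWithin_of_tendsto_nhds_of_eventually_within
    · have : Tendsto (fun ε : ℝ => b - ε) (𝓝 (0 : ℝ)) (𝓝 (b - 0)) :=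
        tendsto_const_nhds.sub tendsto_id
      simpa using this.mono_left nhdsWithin_le_nhds
    · filter_upwards [hIooL] with ε hε
      constructor
      · have : L = b - a := hLdef; linarith [hε.2]
      · linarith [hε.1]
  have hta : Tendsto (fun ε : ℝ => a + ε) (𝓝[>] (0 : ℝ)) (𝓝[Icc a b] a) := by
    apply tendsto_nhdsWithin_of_tendsto_nhds_of_eventually_within
    · have : Tendsto (fun ε : ℝ => a + ε) (𝓝 (0 : ℝ)) (𝓝 (a + 0)) :=
        tendsto_const_nhds.add tendsto_id
      simpa using this.mono_left nhdsWithin_le_nhds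
    · filter_upwards [hIooL] with ε hε
      constructor
      · linarith [hε.1]
      · have : L = b - a := hLdef; linarith [hε.2]
  have hI : Tendsto (fun ε : ℝ => ∫ r in (a + ε)..(b - ε), h r)
      (𝓝[>] (0 : ℝ)) (𝓝 (∫ r in a..b, h r)) := by
    have hPb : Tendsto (fun ε : ℝ => P (b - ε)) (𝓝[>] (0 : ℝ)) (𝓝 (P b)) :=
      ((hPcont b ⟨hab.le, le_refl b⟩).tendsto).comp htb
    have hPa : Tendsto (fun ε : ℝ => P (a + ε)) (𝓝[>] (0 : ℝ)) (𝓝 (P a)) :=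
      ((hPcont a ⟨le_refl a, hab.le⟩).tendsto).comp hta
    have hPa0 : P a = 0 := by
      simp only [hPdef]; exact intervalIntegral.integral_same
    have hPbb : P b = ∫ r in a..b, h r := by simp only [hPdef]
    have := hPb.sub hPa
    rw [hPa0, sub_zero, hPbb] at this
    exact Tendsto.congr' (Filter.EventuallyEq.symm hsplit) this
  -- slope limits
  have hslope_a : Tendsto (fun ε : ℝ => g (a + ε) / ε) (𝓝[>] (0 : ℝ)) (𝓝 (g' a)) := by
    have H := hderiv a ⟨le_refl a, hab.le⟩
    rw [hasDerivWithinAt_iff_tendsto_slope] at H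
    have hmap : Tendsto (fun ε : ℝ => a + ε) (𝓝[>] (0 : ℝ)) (𝓝[Icc a b \ {a}] a) := by
      apply tendsto_nhdsWithin_of_tendsto_nhds_of_eventually_within
      · have : Tendsto (fun ε : ℝ => a + ε) (𝓝 (0 : ℝ)) (𝓝 (a + 0)) :=
          tendsto_const_nhds.add tendsto_id
        simpa using this.mono_left nhdsWithin_le_nhds
      · filter_upwards [hIooL] with ε hε
        refine ⟨⟨by linarith [hε.1], by have : L = b - a := hLdef; linarith [hε.2]⟩, ?_⟩
        simp only [mem_singleton_iff]
        intro hcontra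
        have : ε = 0 := by linarith [congrArg (fun y => y - a) hcontra]
        exact hε.1.ne' this
    have := H.comp hmap
    apply this.congr'
    filter_upwards [hIooL] with ε hε
    simp only [Function.comp_apply, slope_def_field]
    rw [div_eq_div_iff]
    · rw [hga]; ring
    · linarith [hε.1]
    · exact hε.1.ne'
  have hslope_b : Tendsto (fun ε : ℝ => g (b - ε) / (-ε)) (𝓝[>] (0 : ℝ)) (𝓝 (g' b)) := by
    have H := hderiv b ⟨hab.le, le_refl b⟩
    rw [hasDerivWithinAt_iff_tendsto_slope] at H
    have hmap : Tendsto (fun ε : ℝ => b - ε) (𝓝[>] (0 : ℝ)) (𝓝[Icc a b \ {b}] b) := by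
      apply tendsto_nhdsWithin_of_tendsto_nhds_of_eventually_within
      · have : Tendsto (fun ε : ℝ => b - ε) (𝓝 (0 : ℝ)) (𝓝 (b - 0)) :=
          tendsto_const_nhds.sub tendsto_id
        simpa using this.mono_left nhdsWithin_le_nhds
      · filter_upwards [hIooL] with ε hε
        refine ⟨⟨by have : L = b - a := hLdef; linarith [hε.2], by linarith [hε.1]⟩, ?_⟩
        simp only [mem_singleton_iff]
        intro hcontra
        have : ε = 0 := by linarith [congrArg (fun y => b - y) hcontra]
        exact hε.1.ne' this
    have := H.comp hmap
    apply this.congr'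
    filter_upwards [hIooL] with ε hε
    simp only [Function.comp_apply, slope_def_field]
    rw [div_eq_div_iff]
    · rw [hgb]; ring
    · linarith [hε.1]
    · exact (neg_ne_zero.mpr hε.1.ne')
  -- sin limit
  have hsinlim : Tendsto (fun ε : ℝ => Real.sin (c * ε) / (c * ε)) (𝓝[>] (0 : ℝ)) (𝓝 1) := by
    have H : HasDerivAt Real.sin 1 0 := by simpa using Real.hasDerivAt_sin 0
    rw [hasDerivAt_iff_tendsto_slope] at H
    have hmap : Tendsto (fun ε : ℝ => c * ε) (𝓝[>] (0 : ℝ)) (𝓝[≠] (0 : ℝ)) := by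
      apply tendsto_nhdsWithin_of_tendsto_nhds_of_eventually_within
      · have : Tendsto (fun ε : ℝ => c * ε) (𝓝 (0 : ℝ)) (𝓝 (c * 0)) :=
          tendsto_const_nhds.mul tendsto_id
        simpa using this.mono_left nhdsWithin_le_nhds
      · filter_upwards [self_mem_nhdsWithin] with ε hε
        simp only [mem_compl_iff, mem_singleton_iff]
        exact (mul_pos hc0 hε).ne'
    have := H.comp hmap
    apply this.congr'
    filter_upwards [self_mem_nhdsWithin] with ε hε
    simp [Function.comp_apply, slope_def_field, Real.sin_zero]
  set q : ℝ → ℝ := fun ε => ε ^ 3 * Real.cos (c * ε) / Real.sin (c * ε) with hqdef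
  clear_value q
  have hsinpos : ∀ᶠ ε in 𝓝[>] (0 : ℝ), 0 < Real.sin (c * ε) := by
    filter_upwards [hIooL] with ε hε
    apply Real.sin_pos_of_pos_of_lt_pi (mul_pos hc0 hε.1)
    calc c * ε < c * L := (mul_lt_mul_iff_right₀ hc0).mpr hε.2
      _ = Real.pi := hcL
  have hq : Tendsto q (𝓝[>] (0 : ℝ)) (𝓝 0) := by
    have h1 : Tendsto (fun ε : ℝ => ε ^ 2) (𝓝[>] (0 : ℝ)) (𝓝 0) := by
      have : Tendsto (fun ε : ℝ => ε ^ 2) (𝓝 (0 : ℝ)) (𝓝 ((0:ℝ) ^ 2)) :=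
        (continuous_pow 2).tendsto 0
      simpa using this.mono_left nhdsWithin_le_nhds
    have h2 : Tendsto (fun ε : ℝ => Real.cos (c * ε)) (𝓝[>] (0 : ℝ)) (𝓝 1) := by
      have : Tendsto (fun ε : ℝ => Real.cos (c * ε)) (𝓝 (0 : ℝ)) (𝓝 (Real.cos (c * 0))) :=
        (Real.continuous_cos.comp (continuous_const.mul continuous_id)).tendsto 0
      simpa using this.mono_left nhdsWithin_le_nhds
    have h3 : Tendsto (fun ε : ℝ => (Real.sin (c * ε) / (c * ε))⁻¹) (𝓝[>] (0 : ℝ)) (𝓝 1) := by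
      simpa using hsinlim.inv₀ one_ne_zero
    have hprod := ((h1.mul h2).mul h3).div_const c
    rw [show ((0:ℝ) * 1 * 1) / c = 0 by ring] at hprod
    apply hprod.congr'
    filter_upwards [hsinpos, self_mem_nhdsWithin] with ε hs hε
    have hε0 : (0:ℝ) < ε := hε
    simp only [hqdef]
    exact alg3 ε _ _ c hε0.ne' hs.ne' hc0.ne' 
  have hFa : Tendsto (fun ε : ℝ => F (a + ε)) (𝓝[>] (0 : ℝ)) (𝓝 0) := by
    have := (hslope_a.pow 3).mul hq
    rw [mul_zero] at this
    apply this.congr'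
    filter_upwards [hsinpos, self_mem_nhdsWithin] with ε hs hε
    have hε0 : (0:ℝ) < ε := hε
    simp only [hFdef, hqdef, add_sub_cancel_left]
    exact alg1 _ ε _ _ hε0.ne' hs.ne' 
  have hFb : Tendsto (fun ε : ℝ => F (b - ε)) (𝓝[>] (0 : ℝ)) (𝓝 0) := by
    have := (hslope_b.pow 3).mul hq
    rw [mul_zero] at this
    apply this.congr'
    filter_upwards [hsinpos, self_mem_nhdsWithin] with ε hs hε
    have hε0 : (0:ℝ) < ε := hε
    have hθb : c * (b - ε - a) = Real.pi - c * ε := by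
      have hL' : L = b - a := hLdef
      rw [← hcL, hL']; ring
    simp only [hFdef, hqdef, hθb, Real.cos_pi_sub, Real.sin_pi_sub]
    exact alg2 _ ε _ _ hε0.ne' hs.ne' 
  have hB : Tendsto (fun ε : ℝ => (4 * c / 9) * (F (b - ε) - F (a + ε)))
      (𝓝[>] (0 : ℝ)) (𝓝 0) := by
    have := (hFb.sub hFa).const_mul (4 * c / 9)
    simpa using this
  have hfinal : (0 : ℝ) ≤ ∫ r in a..b, h r := by
    refine le_of_tendsto_of_tendsto hB hI ?_
    filter_upwards [hIooL2] with ε hε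
    exact key ε hε
  exact hfinal

/-- a Poincaré-type inequality used in the blow-up proof:
for `g : [R0,R1] → ℝ` continuously differentiable, nonnegative, vanishing at
the endpoints, `∫ g'² g ≥ (4π²/(9(R1−R0)²)) ∫ g³`. -/
theorem poincare_cubed
    (R0 R1 : ℝ) (hR0 : 0 < R0) (hR : R0 < R1)
    (g g' : ℝ → ℝ)
    (hderiv : ∀ r ∈ Icc R0 R1, HasDerivWithinAt g (g' r) (Icc R0 R1) r)
    (hg'cont : ContinuousOn g' (Icc R0 R1))
    (hgpos : ∀ r ∈ Icc R0 R1, 0 ≤ g r)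
    (hgR0 : g R0 = 0) (hgR1 : g R1 = 0) :
    (∫ r in R0..R1, (g' r) ^ 2 * g r)
      ≥ 4 * Real.pi ^ 2 / (9 * (R1 - R0) ^ 2) * ∫ r in R0..R1, (g r) ^ 3 := by
  have haux := poincare_cubed_aux R0 R1 hR g g' hderiv hg'cont hgpos hgR0 hgR1
  have hgcont : ContinuousOn g (Icc R0 R1) := fun x hx => (hderiv x hx).continuousWithinAt
  have huIcc : uIcc R0 R1 = Icc R0 R1 := uIcc_of_le hR.le
  have hint1 : IntervalIntegrable (fun r => g' r ^ 2 * g r) volume R0 R1 :=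
    (huIcc ▸ ((hg'cont.pow 2).mul hgcont) :
      ContinuousOn _ (uIcc R0 R1)).intervalIntegrable
  have hint2 : IntervalIntegrable (fun r => 4 * (Real.pi / (R1 - R0)) ^ 2 / 9 * g r ^ 3)
      volume R0 R1 :=
    (huIcc ▸ (continuousOn_const.mul (hgcont.pow 3)) :
      ContinuousOn _ (uIcc R0 R1)).intervalIntegrable
  rw [intervalIntegral.integral_sub hint1 hint2, intervalIntegral.integral_const_mul,
    sub_nonneg] at haux
  have hco : 4 * (Real.pi / (R1 - R0)) ^ 2 / 9 = 4 * Real.pi ^ 2 / (9 * (R1 - R0) ^ 2) := by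
    have : R1 - R0 ≠ 0 := sub_ne_zero.mpr hR.ne'
    field_simp
  rw [hco] at haux
  exact haux
end

section
/- Let a < 0, b ∈ ℝ, c > 0, and let Q : [0,∞) → M₂(ℝ) be differentiable with Q(t) symmetric and traceless for every t, satisfying Q'(t) = −a Q(t) + b( Q(t)² − (tr(Q(t)²)/2) I ) − c tr(Q(t)²) Q(t). If |Q(0)| ≤ √(−a/c), then |Q(t)| ≤ √(−a/c) for all t ≥ 0. -/
open Set

-- test aux lemma
lemma hasDerivAt_maxsq (x : ℝ) : HasDerivAt (fun y : ℝ => (max y 0)^2) (2 * max x 0) x := by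
  rcases lt_trichotomy x 0 with h|h|h
  · rw [max_eq_right h.le]
    have hev : (fun y : ℝ => (max y 0)^2) =ᶠ[nhds x] fun _ => (0:ℝ) := by
      filter_upwards [Iio_mem_nhds h] with z hz
      simp [max_eq_right (le_of_lt (mem_Iio.mp hz))]
    simpa using (hasDerivAt_const x (0:ℝ)).congr_of_eventuallyEq hev
  · subst h
    rw [max_self, mul_zero]
    rw [hasDerivAt_iff_isLittleO]
    rw [Asymptotics.isLittleO_iff]
    intro ε hε
    filter_upwards [Metric.ball_mem_nhds 0 hε] with z hz
    simp only [Real.norm_eq_abs, max_self, smul_zero, sub_zero, ne_eq]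
    have h1 : (max z 0)^2 ≤ |z| * |z| := by
      rcases le_or_gt z 0 with hz0 | hz0
      · rw [max_eq_right hz0]; nlinarith [abs_nonneg z]
      · rw [max_eq_left hz0.le, abs_of_pos hz0]; nlinarith
    have h2 : |z| < ε := by simpa [Real.dist_eq] using hz
    have h3 : |(max z 0)^2 - 0^2| = (max z 0)^2 := by
      rw [sub_eq_self.mpr (by norm_num)]; exact abs_of_nonneg (by positivity)
    calc |(max z 0)^2 - 0^2| = (max z 0)^2 := h3
      _ ≤ |z| * |z| := h1
      _ ≤ ε * |z| := by nlinarith [abs_nonneg z]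
  · rw [max_eq_left h.le]
    have hev : (fun y : ℝ => (max y 0)^2) =ᶠ[nhds x] fun y => y^2 := by
      filter_upwards [Ioi_mem_nhds h] with z hz
      simp [max_eq_left (le_of_lt (mem_Ioi.mp hz))]
    simpa using ((hasDerivAt_pow 2 x)).congr_of_eventuallyEq hev

/-- 2D bulk ODE, preservation of the physicality ball for
`a < 0`: if `|Q(0)| ≤ √(−a/c)` then `|Q(t)| ≤ √(−a/c)` for all `t ≥ 0`, where
`|Q| = √(tr Q²)` is the Frobenius norm. -/
theorem bulk_ode_ball_preservation_2d_neg
    (a b c : ℝ) (ha : a < 0) (hc : 0 < c)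
    (Q : ℝ → Matrix (Fin 2) (Fin 2) ℝ)
    (hsym : ∀ t, (Q t).IsSymm) (htr : ∀ t, (Q t).trace = 0)
    (hode : ∀ t, 0 ≤ t → ∀ i j : Fin 2,
      HasDerivWithinAt (fun s => Q s i j)
        (-a * Q t i j
          + b * ((Q t * Q t) i j - (Q t * Q t).trace / 2 * (if i = j then 1 else 0))
          - c * (Q t * Q t).trace * Q t i j)
        (Ici 0) t)
    (hinit : Real.sqrt ((Q 0 * Q 0).trace) ≤ Real.sqrt (-a / c)) :
    ∀ t, 0 ≤ t → Real.sqrt ((Q t * Q t).trace) ≤ Real.sqrt (-a / c) := by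
  set M : ℝ := -a / c with hM
  have hM0 : 0 < M := div_pos (neg_pos.mpr ha) hc
  -- entry relations
  have h10 : ∀ t, Q t 1 0 = Q t 0 1 := by
    intro t
    have := hsym t
    rw [Matrix.IsSymm] at this
    have := congrFun (congrFun this 1) 0
    simpa [Matrix.transpose_apply] using this.symm
  have h11 : ∀ t, Q t 1 1 = -(Q t 0 0) := by
    intro t
    have := htr t
    rw [Matrix.trace_fin_two] at this
    linarith
  -- trace formula
  have htrace : ∀ t, (Q t * Q t).trace = 2 * ((Q t 0 0)^2 + (Q t 0 1)^2) := by
    intro t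
    rw [Matrix.trace_fin_two]
    simp [Matrix.mul_apply, Fin.sum_univ_two, h10 t, h11 t]
    ring
  have hy0 : ∀ t, 0 ≤ (Q t * Q t).trace := by
    intro t; rw [htrace t]; positivity
  -- the scalar function
  set f : ℝ → ℝ := fun t => 2 * ((Q t 0 0)^2 + (Q t 0 1)^2) with hf
  have hfderiv : ∀ t, 0 ≤ t →
      HasDerivWithinAt f ((-2*a - 2*c*(f t)) * f t) (Ici 0) t := by
    intro t ht
    have hp := hode t ht 0 0
    have hq := hode t ht 0 1
    have e00 : (Q t * Q t) 0 0 = (Q t 0 0)^2 + (Q t 0 1)^2 := by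
      simp [Matrix.mul_apply, Fin.sum_univ_two, h10 t]
      ring
    have e01 : (Q t * Q t) 0 1 = 0 := by
      simp [Matrix.mul_apply, Fin.sum_univ_two, h10 t, h11 t]
      ring
    rw [e00, htrace t] at hp
    rw [e01, htrace t] at hq
    have hd := (((hp.pow 2).add (hq.pow 2)).const_mul (2:ℝ))
    convert hd using 1
    · rfl
    · rfl
    simp only [hf, htrace t, Nat.cast_ofNat]
    norm_num
    simp only [hf]
    norm_num
    ring
  -- h = (max (f - M) 0)^2 is antitone on [0, T]
  have hh : ∀ t, 0 ≤ t →
      HasDerivWithinAt (fun s => (max (f s - M) 0)^2)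
        (2 * max (f t - M) 0 * ((-2*a - 2*c*(f t)) * f t)) (Ici 0) t := by
    intro t ht
    exact (hasDerivAt_maxsq (f t - M)).comp_hasDerivWithinAt t
      ((hfderiv t ht).sub_const M)
  have hnonpos : ∀ t, 0 ≤ t →
      2 * max (f t - M) 0 * ((-2*a - 2*c*(f t)) * f t) ≤ 0 := by
    intro t ht
    rcases le_or_gt (f t) M with h | h
    · rw [max_eq_right (by linarith)]; simp
    · rw [max_eq_left (by linarith)]
      have hft : 0 < f t := lt_trans hM0 h
      have : -2*a - 2*c*(f t) < 0 := by
        have : a = -(c * M) := by rw [hM]; field_simp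
        nlinarith
      have hu : 0 < 2 * (f t - M) * f t := by nlinarith
      have := mul_neg_of_neg_of_pos this hu
      nlinarith
  intro t ht
  have hfle : f t ≤ M := by
    by_contra hcon
    push_neg at hcon
    -- f 0 ≤ M
    have hf0 : f 0 ≤ M := by
      have h0 : 0 ≤ (Q 0 * Q 0).trace := hy0 0
      have : (Q 0 * Q 0).trace ≤ M := by
        nlinarith [Real.sq_sqrt h0, Real.sq_sqrt (le_of_lt hM0),
          Real.sqrt_nonneg ((Q 0 * Q 0).trace), Real.sqrt_nonneg M,
          mul_self_le_mul_self (Real.sqrt_nonneg ((Q 0 * Q 0).trace)) hinit]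
      simpa only [hf, ← htrace 0] using this
    -- antitone on Icc 0 t
    set g : ℝ → ℝ := fun s => (max (f s - M) 0)^2 with hg
    have hanti : AntitoneOn g (Icc 0 t) := by
      apply antitoneOn_of_deriv_nonpos (convex_Icc 0 t)
      · intro s hs
        exact ((hh s hs.1).mono (fun x hx => hx.1)).continuousWithinAt
      · intro s hs
        rw [interior_Icc] at hs
        exact (((hh s hs.1.le).hasDerivAt (Ici_mem_nhds hs.1)).differentiableAt).differentiableWithinAt
      · intro s hs
        rw [interior_Icc] at hs
        have hd := (hh s hs.1.le).hasDerivAt (Ici_mem_nhds hs.1)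
        rw [hd.deriv]
        exact hnonpos s hs.1.le
    have h1 : g t ≤ g 0 := hanti (left_mem_Icc.mpr ht) (⟨ht, le_refl t⟩) ht
    have hg0 : g 0 = 0 := by
      simp only [hg]
      rw [max_eq_right (by linarith)]
      norm_num
    have hgt : 0 < g t := by
      simp only [hg]
      rw [max_eq_left (by linarith)]
      exact pow_pos (by linarith) 2
    linarith
  have : (Q t * Q t).trace ≤ M := by rw [htrace t]; exact hfle
  exact Real.sqrt_le_sqrt this
end

section
/- Let a ∈ ℝ, b ≥ 0, c > 0 with b² − 24ac ≥ 0, and set s₊ = (b + √(b² − 24ac))/(4c). Let Q : [0,∞) → M₃(ℝ) be differentiable with Q(t) symmetric and traceless for every t, satisfying the ODE Q'(t) = −a Q(t) + b( Q(t)² − (tr(Q(t)²)/3) I ) − c tr(Q(t)²) Q(t). If |Q(0)|² ≤ (2/3) s₊², then |Q(t)|² ≤ (2/3) s₊² for all t ≥ 0. -/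
set_option maxHeartbeats 1000000

open Set

private lemma trace_conj3 {n : Type*} [Fintype n] [DecidableEq n]
    (U : Matrix.unitaryGroup n ℝ) (M : Matrix n n ℝ) :
    ((U : Matrix n n ℝ) * M * star (U : Matrix n n ℝ)).trace = M.trace := by
  rw [Matrix.trace_mul_cycle]
  rw [Unitary.coe_star_mul_self, Matrix.one_mul]

private lemma traces_eq (A : Matrix (Fin 3) (Fin 3) ℝ) (hA : A.IsHermitian) :
    A.trace = ∑ i, hA.eigenvalues i ∧
    (A*A).trace = ∑ i, hA.eigenvalues i ^ 2 ∧
    (A*A*A).trace = ∑ i, hA.eigenvalues i ^ 3 := by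
  set U := hA.eigenvectorUnitary with hU
  set D : Matrix (Fin 3) (Fin 3) ℝ := Matrix.diagonal (RCLike.ofReal ∘ hA.eigenvalues) with hD
  have hspec : A = (U : Matrix (Fin 3) (Fin 3) ℝ) * D * star (U : Matrix (Fin 3) (Fin 3) ℝ) :=
    hA.spectral_theorem
  have hsU : star (U : Matrix (Fin 3) (Fin 3) ℝ) * (U : Matrix (Fin 3) (Fin 3) ℝ) = 1 :=
    Unitary.coe_star_mul_self U
  have h2 : A * A = (U : Matrix (Fin 3) (Fin 3) ℝ) * (D * D) * star (U : Matrix (Fin 3) (Fin 3) ℝ) := by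
    conv_lhs => rw [hspec]
    calc (↑U * D * star ↑U) * (↑U * D * star ↑U)
        = ↑U * D * (star ↑U * ↑U) * D * star ↑U := by
          simp only [Matrix.mul_assoc]
      _ = ↑U * (D * D) * star ↑U := by rw [hsU]; simp only [Matrix.mul_one, Matrix.mul_assoc]
  have h3 : A * A * A = (U : Matrix (Fin 3) (Fin 3) ℝ) * (D * D * D) * star (U : Matrix (Fin 3) (Fin 3) ℝ) := by
    rw [h2]
    conv_lhs => rw [hspec]
    calc (↑U * (D * D) * star ↑U) * (↑U * D * star ↑U)
        = ↑U * (D * D) * (star ↑U * ↑U) * D * star ↑U := by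
          simp only [Matrix.mul_assoc]
      _ = ↑U * (D * D * D) * star ↑U := by rw [hsU]; simp only [Matrix.mul_one, Matrix.mul_assoc]
  have hDD : D * D = Matrix.diagonal (fun i => hA.eigenvalues i ^ 2) := by
    rw [hD, Matrix.diagonal_mul_diagonal]
    congr 1; funext i; simp [sq]
  have hDDD : D * D * D = Matrix.diagonal (fun i => hA.eigenvalues i ^ 3) := by
    rw [hDD, hD, Matrix.diagonal_mul_diagonal]
    congr 1
  refine ⟨?_, ?_, ?_⟩
  · conv_lhs => rw [hspec]
    rw [trace_conj3, hD, Matrix.trace_diagonal]; simp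
  · rw [h2, trace_conj3, hDD, Matrix.trace_diagonal]
  · rw [h3, trace_conj3, hDDD, Matrix.trace_diagonal]

private lemma key_ineq (A : Matrix (Fin 3) (Fin 3) ℝ) (hsymA : A.IsSymm) (htrA : A.trace = 0) :
    0 ≤ (A*A).trace ∧ 6 * ((A*A*A).trace)^2 ≤ ((A*A).trace)^3 := by
  have hA : A.IsHermitian := by
    rw [Matrix.IsHermitian, Matrix.conjTranspose_eq_transpose_of_trivial]; exact hsymA
  obtain ⟨h1, h2, h3⟩ := traces_eq A hA
  rw [Fin.sum_univ_three] at h1 h2 h3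
  set x := hA.eigenvalues 0
  set y := hA.eigenvalues 1
  set z := hA.eigenvalues 2
  rw [h1] at htrA
  have hz : z = -x - y := by linarith
  rw [h2, h3, hz]
  constructor
  · positivity
  · nlinarith [sq_nonneg ((x-y)*(x+2*y)*(2*x+y)), sq_nonneg x, sq_nonneg y]

private lemma deriv_trace_sq (a b c : ℝ) (Q : ℝ → Matrix (Fin 3) (Fin 3) ℝ)
    (htr : ∀ t, (Q t).trace = 0)
    (hode : ∀ t, 0 ≤ t → ∀ i j : Fin 3,
      HasDerivWithinAt (fun u => Q u i j)
        (-a * Q t i j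
          + b * ((Q t * Q t) i j - (Q t * Q t).trace / 3 * (if i = j then 1 else 0))
          - c * (Q t * Q t).trace * Q t i j)
        (Ici 0) t)
    (t : ℝ) (ht : 0 ≤ t) :
    HasDerivWithinAt (fun u => (Q u * Q u).trace)
      (-(2*a) * (Q t * Q t).trace + 2*b * (Q t * Q t * Q t).trace
        - 2*c * ((Q t * Q t).trace)^2) (Ici 0) t := by
  set d : Fin 3 → Fin 3 → ℝ := fun i j =>
    -a * Q t i j + b * ((Q t * Q t) i j - (Q t * Q t).trace / 3 * (if i = j then 1 else 0))
      - c * (Q t * Q t).trace * Q t i j with hd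
  have h1 : HasDerivWithinAt (fun u => ∑ i : Fin 3, ∑ j : Fin 3, Q u i j * Q u j i)
      (∑ i : Fin 3, ∑ j : Fin 3, (d i j * Q t j i + Q t i j * d j i)) (Ici 0) t := by
    apply HasDerivWithinAt.fun_sum
    intro i _
    apply HasDerivWithinAt.fun_sum
    intro j _
    exact (hode t ht i j).mul (hode t ht j i)
  have hfun : (fun u => (Q u * Q u).trace) = (fun u => ∑ i : Fin 3, ∑ j : Fin 3, Q u i j * Q u j i) := by
    funext u
    simp [Matrix.trace, Matrix.mul_apply, Matrix.diag]
  rw [hfun]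
  convert h1 using 1
  have h0 : Q t 2 2 = -Q t 0 0 - Q t 1 1 := by
    have := htr t
    rw [Matrix.trace_fin_three] at this
    linarith
  simp only [hd, Matrix.trace_fin_three, Matrix.mul_apply, Fin.sum_univ_three]
  norm_num [Fin.ext_iff]
  rw [h0]
  ring

private lemma g_lt (a b c r K e : ℝ) (hb : 0 ≤ b) (hc : 0 < c) (hr : 0 ≤ r)
    (he0 : 0 < e) (he2 : e^2 = 6)
    (ha : a = b * r / e - c * r^2) (hbr : 0 < b → 0 < r)
    (hK : K = 1 + b^3/(6*e*c^2*r)) :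
    ∀ u, 0 ≤ u → r < u → 2*(-a*u^2 + b*u^3/e - c*u^4) < K*(u^2 - r^2) := by
  intro u hu hru
  have hP : 0 ≤ b^3/(6*e*c^2*r) := by positivity
  have hKpos : 0 < K := by rw [hK]; linarith
  have hK1 : 1 ≤ K := by rw [hK]; linarith
  have hsq : r^2 < u^2 := by nlinarith
  have hfactor : 2*(-a*u^2 + b*u^3/e - c*u^4) = 2*u^2*(u-r)*(b/e - c*(u+r)) := by
    rw [ha]; field_simp; ring
  rw [hfactor]
  rcases le_or_gt (b/e) (c*(u+r)) with hcase | hcase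
  · have h1 : 0 ≤ 2*u^2*(u-r) := by nlinarith
    have h2 : b/e - c*(u+r) ≤ 0 := by linarith
    have h3 : 2*u^2*(u-r)*(b/e - c*(u+r)) ≤ 0 := mul_nonpos_of_nonneg_of_nonpos h1 h2
    have h4 : 0 < K*(u^2 - r^2) := mul_pos hKpos (by linarith)
    linarith
  · have hbe : 0 < b/e := lt_of_le_of_lt (by positivity) hcase
    have hb0 : 0 < b := by
      have := mul_pos hbe he0
      rwa [div_mul_cancel₀ _ (ne_of_gt he0)] at this
    have hr0 : 0 < r := hbr hb0
    have hur : 0 < u := lt_of_le_of_lt hr hru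
    have hM : u + r < b/(c*e) := by
      rw [lt_div_iff₀ (by positivity)]
      calc (u+r)*(c*e) = (c*(u+r))*e := by ring
        _ < (b/e)*e := by exact mul_lt_mul_of_pos_right hcase he0
        _ = b := by field_simp
    have hM0 : 0 < b/(c*e) := by positivity
    have core : 2*u^2*(b/e - c*(u+r)) < K*(u+r) := by
      have hu2 : u^2 < (b/(c*e))^2 := by
        have : u < b/(c*e) := lt_of_le_of_lt (by linarith) hM
        nlinarith
      calc 2*u^2*(b/e - c*(u+r)) ≤ 2*u^2*(b/e) := by
            have hcu : (0:ℝ) ≤ c*(u+r) := by positivity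
            have := mul_le_mul_of_nonneg_left (show b/e - c*(u+r) ≤ b/e by linarith)
              (show (0:ℝ) ≤ 2*u^2 by positivity)
            linarith
        _ < 2*((b/(c*e))^2)*(b/e) := by
            apply mul_lt_mul_of_pos_right _ hbe
            linarith
        _ = 2*r*(b^3/(6*e*c^2*r)) := by
            have he3 : e^3 = 6*e := by
              rw [show (3:ℕ) = 2+1 from rfl, pow_succ, he2]
            field_simp
            linear_combination (-1) * he2
        _ < 2*r*K := by
            apply mul_lt_mul_of_pos_left _ (by positivity)
            rw [hK]; linarith
        _ ≤ K*(u+r) := by nlinarith [mul_pos hKpos (show (0:ℝ) < u - r by linarith)]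
    calc 2*u^2*(u-r)*(b/e - c*(u+r)) = (u-r)*(2*u^2*(b/e - c*(u+r))) := by ring
      _ < (u-r)*(K*(u+r)) := mul_lt_mul_of_pos_left core (by linarith)
      _ = K*(u^2-r^2) := by ring

/-- 3D bulk ODE, preservation of the ball `|Q|² ≤ (2/3)s₊²`:
with `s₊ = (b + √(b²−24ac))/(4c)`, if `|Q(0)|² ≤ (2/3)s₊²` then
`|Q(t)|² ≤ (2/3)s₊²` for all `t ≥ 0`, where `|Q|² = tr(Q²)`. -/
theorem bulk_ode_ball_preservation_3d
    (a b c s : ℝ) (hb : 0 ≤ b) (hc : 0 < c) (hdisc : 0 ≤ b ^ 2 - 24 * a * c)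
    (hs : s = (b + Real.sqrt (b ^ 2 - 24 * a * c)) / (4 * c))
    (Q : ℝ → Matrix (Fin 3) (Fin 3) ℝ)
    (hsym : ∀ t, (Q t).IsSymm) (htr : ∀ t, (Q t).trace = 0)
    (hode : ∀ t, 0 ≤ t → ∀ i j : Fin 3,
      HasDerivWithinAt (fun u => Q u i j)
        (-a * Q t i j
          + b * ((Q t * Q t) i j - (Q t * Q t).trace / 3 * (if i = j then 1 else 0))
          - c * (Q t * Q t).trace * Q t i j)
        (Ici 0) t)
    (hinit : (Q 0 * Q 0).trace ≤ 2 / 3 * s ^ 2) :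
    ∀ t, 0 ≤ t → (Q t * Q t).trace ≤ 2 / 3 * s ^ 2 := by
  have he0 : (0:ℝ) < Real.sqrt 6 := Real.sqrt_pos.2 (by norm_num)
  have he2 : (Real.sqrt 6)^2 = 6 := Real.sq_sqrt (by norm_num)
  set e : ℝ := Real.sqrt 6 with hedef
  set dsq : ℝ := Real.sqrt (b ^ 2 - 24 * a * c) with hdsqdef
  have hd0 : 0 ≤ dsq := Real.sqrt_nonneg _
  have hd2 : dsq^2 = b^2 - 24*a*c := Real.sq_sqrt hdisc
  have hs0 : 0 ≤ s := by rw [hs]; positivity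
  have hseq : 4*c*s = b + dsq := by rw [hs]; field_simp
  have hrel : 2*c*s^2 - b*s + 3*a = 0 := by
    have h8 : (8*c) * (2*c*s^2 - b*s + 3*a) = 0 := by
      linear_combination (4*c*s - b + dsq)*hseq + hd2
    rcases mul_eq_zero.1 h8 with h | h
    · exfalso; linarith
    · exact h
  clear_value e dsq
  have hbs : 0 < b → 0 < s := by
    intro hb0
    nlinarith
  set r : ℝ := s * e / 3 with hrdef
  have hr0 : 0 ≤ r := by positivity
  have hrR : r^2 = 2/3*s^2 := by
    rw [hrdef]
    linear_combination (s^2/9) * he2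
  have ha' : a = b * r / e - c * r^2 := by
    rw [hrdef]
    field_simp
    linear_combination 3*hrel + (s^2*c)*he2
  have hbr : 0 < b → 0 < r := by
    intro hb0
    have := hbs hb0
    rw [hrdef]
    positivity
  clear_value r
  set K : ℝ := 1 + b^3/(6*e*c^2*r) with hKdef
  clear_value K
  have ynn : ∀ u, 0 ≤ (Q u * Q u).trace := fun u => (key_ineq (Q u) (hsym u) (htr u)).1
  have ycube : ∀ u, 6 * ((Q u * Q u * Q u).trace)^2 ≤ ((Q u * Q u).trace)^3 :=
    fun u => (key_ineq (Q u) (hsym u) (htr u)).2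
  set y : ℝ → ℝ := fun u => (Q u * Q u).trace with hydef
  set yd : ℝ → ℝ := fun u =>
    -(2*a) * y u + 2*b * (Q u * Q u * Q u).trace - 2*c * (y u)^2 with hyddef
  have hyd : ∀ x, 0 ≤ x → HasDerivWithinAt y (yd x) (Ici 0) x :=
    fun x hx => deriv_trace_sq a b c Q htr hode x hx
  intro t ht
  have main : ∀ ε, 0 < ε → y t ≤ 2/3*s^2 + ε * Real.exp (K*t) := by
    intro ε hε
    have hf : ContinuousOn y (Icc 0 t) := fun x hx =>
      ((hyd x hx.1).continuousWithinAt).mono Icc_subset_Ici_self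
    have hf' : ∀ x ∈ Ico 0 t, HasDerivWithinAt y (yd x) (Ici x) x :=
      fun x hx => (hyd x hx.1).mono (Ici_subset_Ici.2 hx.1)
    have hB : ∀ x, HasDerivAt (fun x => 2/3*s^2 + ε * Real.exp (K*x))
        (ε * (Real.exp (K*x) * K)) x := by
      intro x
      have h1 : HasDerivAt (fun x : ℝ => K*x) K x := by
        simpa using (hasDerivAt_id x).const_mul K
      exact ((h1.exp).const_mul ε).const_add _
    have ha0 : y 0 ≤ 2/3*s^2 + ε * Real.exp (K*0) := by
      have : Real.exp (K*0) = 1 := by rw [mul_zero, Real.exp_zero]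
      rw [this]
      have : y 0 ≤ 2/3*s^2 := hinit
      linarith
    have bound : ∀ x ∈ Ico 0 t, y x = 2/3*s^2 + ε * Real.exp (K*x) →
        yd x < ε * (Real.exp (K*x) * K) := by
      intro x hx hcontact
      have hynn := ynn x
      have hexp : 0 < Real.exp (K*x) := Real.exp_pos _
      set u : ℝ := Real.sqrt (y x) with hudef
      have hu0 : 0 ≤ u := Real.sqrt_nonneg _
      have hu2 : u^2 = y x := Real.sq_sqrt hynn
      clear_value u
      have hyR : 2/3*s^2 < y x := by
        rw [hcontact]
        nlinarith
      have hru : r < u := by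
        have : r^2 < u^2 := by rw [hu2, hrR]; exact hyR
        nlinarith
      have hT3 : (Q x * Q x * Q x).trace ≤ u^3/e := by
        have h1 : ((Q x * Q x * Q x).trace)^2 ≤ (u^3/e)^2 := by
          have : (u^3/e)^2 = (y x)^3/6 := by
            rw [div_pow, he2, ← hu2]; ring
          rw [this]
          linarith [ycube x]
        calc (Q x * Q x * Q x).trace ≤ |(Q x * Q x * Q x).trace| := le_abs_self _
          _ = Real.sqrt (((Q x * Q x * Q x).trace)^2) := (Real.sqrt_sq_eq_abs _).symm
          _ ≤ Real.sqrt ((u^3/e)^2) := Real.sqrt_le_sqrt h1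
          _ = u^3/e := Real.sqrt_sq (by positivity)
      have step1 : yd x ≤ 2*(-a*u^2 + b*u^3/e - c*u^4) := by
        have hu4 : u^4 = (y x)^2 := by rw [← hu2]; ring
        have hbT := mul_le_mul_of_nonneg_left hT3 (show (0:ℝ) ≤ 2*b by linarith)
        simp only [hyddef]
        rw [← hu2]
        ring_nf at hbT ⊢
        linarith
      have step2 : 2*(-a*u^2 + b*u^3/e - c*u^4) < K*(u^2 - r^2) :=
        g_lt a b c r K e hb hc hr0 he0 he2 ha' hbr hKdef u hu0 hru
      have step3 : K*(u^2 - r^2) = ε * (Real.exp (K*x) * K) := by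
        rw [hu2, hrR, hcontact]; ring
      exact lt_of_le_of_lt step1 (step3 ▸ step2)
    exact image_le_of_deriv_right_lt_deriv_boundary hf hf' ha0 hB bound (right_mem_Icc.2 ht)
  refine le_of_forall_pos_le_add ?_
  intro δ hδ
  have hexp : 0 < Real.exp (K*t) := Real.exp_pos _
  have := main (δ / Real.exp (K*t)) (by positivity)
  rwa [div_mul_cancel₀ _ (ne_of_gt hexp)] at this
end

section
/- Let a ∈ ℝ, b ≥ 0, c > 0 with b² − 24ac ≥ 0 and |a| < b²/(3c), and set s₊ = (b + √(b² − 24ac))/(4c). Let Q : [0,∞) → M₃(ℝ) be differentiable with Q(t) symmetric and traceless for every t, satisfying the ODE Q'(t) = −a Q(t) + b( Q(t)² − (tr(Q(t)²)/3) I ) − c tr(Q(t)²) Q(t). If every eigenvalue of Q(0) lies in the interval [−s₊/3, 2s₊/3], then for every t ≥ 0, every eigenvalue of Q(t) lies in [−s₊/3, 2s₊/3]. -/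
open Set

namespace BulkAux
open Matrix Finset RealInnerProductSpace

variable {A B : Matrix (Fin 3) (Fin 3) ℝ}

noncomputable def lmin (hA : A.IsHermitian) : ℝ :=
  min (min (hA.eigenvalues 0) (hA.eigenvalues 1)) (hA.eigenvalues 2)

lemma lmin_le (hA : A.IsHermitian) (i : Fin 3) : lmin hA ≤ hA.eigenvalues i := by
  fin_cases i
  · exact le_trans (min_le_left _ _) (min_le_left _ _)
  · exact le_trans (min_le_left _ _) (min_le_right _ _)
  · exact min_le_right _ _

lemma exists_lmin (hA : A.IsHermitian) : ∃ i, hA.eigenvalues i = lmin hA := by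
  unfold lmin
  rcases le_total (hA.eigenvalues 0) (hA.eigenvalues 1) with h|h <;>
  rcases le_total (min (hA.eigenvalues 0) (hA.eigenvalues 1)) (hA.eigenvalues 2) with h2|h2
  · exact ⟨0, by rw [min_eq_left h2, min_eq_left h]⟩
  · exact ⟨2, by rw [min_eq_right h2]⟩
  · exact ⟨1, by rw [min_eq_left h2, min_eq_right h]⟩
  · exact ⟨2, by rw [min_eq_right h2]⟩

lemma inner_dot (x y : EuclideanSpace ℝ (Fin 3)) : ⟪x, y⟫ = (x : Fin 3 → ℝ) ⬝ᵥ (y : Fin 3 → ℝ) := by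
  simp [PiLp.inner_apply, dotProduct, RCLike.inner_apply, mul_comm]

lemma repr_mulVec (hA : A.IsHermitian) (v : EuclideanSpace ℝ (Fin 3)) (i : Fin 3) :
    hA.eigenvectorBasis.repr (Matrix.toEuclideanLin A v) i
      = hA.eigenvalues i * hA.eigenvectorBasis.repr v i := by
  have hsym := (Matrix.isHermitian_iff_isSymmetric.mp hA)
  rw [OrthonormalBasis.repr_apply_apply, OrthonormalBasis.repr_apply_apply,
    ← hsym (hA.eigenvectorBasis i) v]
  have hTe : Matrix.toEuclideanLin A (hA.eigenvectorBasis i)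
      = hA.eigenvalues i • hA.eigenvectorBasis i := by
    apply (WithLp.equiv 2 _).injective
    simpa [Matrix.toEuclideanLin_apply] using hA.mulVec_eigenvectorBasis i
  rw [hTe, real_inner_smul_left]

lemma quad_expand (hA : A.IsHermitian) (v : EuclideanSpace ℝ (Fin 3)) :
    (v : Fin 3 → ℝ) ⬝ᵥ (A *ᵥ (v : Fin 3 → ℝ))
      = ∑ i, hA.eigenvalues i * (hA.eigenvectorBasis.repr v i * hA.eigenvectorBasis.repr v i) := by
  have h1 : (v : Fin 3 → ℝ) ⬝ᵥ (A *ᵥ (v : Fin 3 → ℝ)) = ⟪v, Matrix.toEuclideanLin A v⟫ := by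
    rw [inner_dot]; rfl
  rw [h1, ← hA.eigenvectorBasis.repr.inner_map_map v (Matrix.toEuclideanLin A v), inner_dot]
  simp only [dotProduct]
  refine Finset.sum_congr rfl fun i _ => ?_
  have := repr_mulVec hA v i
  show hA.eigenvectorBasis.repr v i * hA.eigenvectorBasis.repr (Matrix.toEuclideanLin A v) i = _
  rw [this]; ring

lemma norm_expand (hA : A.IsHermitian) (v : EuclideanSpace ℝ (Fin 3)) :
    (v : Fin 3 → ℝ) ⬝ᵥ (v : Fin 3 → ℝ)
      = ∑ i, hA.eigenvectorBasis.repr v i * hA.eigenvectorBasis.repr v i := by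
  rw [← inner_dot, ← hA.eigenvectorBasis.repr.inner_map_map v v, inner_dot]
  rfl

lemma lmin_le_quad (hA : A.IsHermitian) (v : Fin 3 → ℝ) (hv : v ⬝ᵥ v = 1) :
    lmin hA ≤ v ⬝ᵥ (A *ᵥ v) := by
  set vE : EuclideanSpace ℝ (Fin 3) := WithLp.toLp 2 v with hvE
  rw [show v ⬝ᵥ (A *ᵥ v) = (vE : Fin 3 → ℝ) ⬝ᵥ (A *ᵥ (vE : Fin 3 → ℝ)) from rfl,
    quad_expand hA vE]
  have hn : ∑ i, hA.eigenvectorBasis.repr vE i * hA.eigenvectorBasis.repr vE i = 1 := by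
    rw [← norm_expand hA vE]; exact hv
  calc lmin hA = lmin hA * ∑ i, hA.eigenvectorBasis.repr vE i * hA.eigenvectorBasis.repr vE i := by
        rw [hn, mul_one]
    _ = ∑ i, lmin hA * (hA.eigenvectorBasis.repr vE i * hA.eigenvectorBasis.repr vE i) := by
        rw [Finset.mul_sum]
    _ ≤ _ := by
        refine Finset.sum_le_sum fun i _ => ?_
        exact mul_le_mul_of_nonneg_right (lmin_le hA i) (mul_self_nonneg _)

lemma exists_eigvec (hA : A.IsHermitian) :
    ∃ v : Fin 3 → ℝ, v ⬝ᵥ v = 1 ∧ A *ᵥ v = lmin hA • v := by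
  obtain ⟨i, hi⟩ := exists_lmin hA
  refine ⟨hA.eigenvectorBasis i, ?_, ?_⟩
  · rw [show ((hA.eigenvectorBasis i : EuclideanSpace ℝ (Fin 3)) : Fin 3 → ℝ) ⬝ᵥ
        (hA.eigenvectorBasis i : EuclideanSpace ℝ (Fin 3)) = ⟪hA.eigenvectorBasis i,
        hA.eigenvectorBasis i⟫ from (inner_dot _ _).symm,
      real_inner_self_eq_norm_mul_norm, hA.eigenvectorBasis.orthonormal.1 i, mul_one]
  · have h2 := hA.mulVec_eigenvectorBasis i
    rw [hi] at h2
    exact h2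

lemma eigvec_of_quad_eq (hA : A.IsHermitian) (v : Fin 3 → ℝ) (hv : v ⬝ᵥ v = 1)
    (hq : v ⬝ᵥ (A *ᵥ v) = lmin hA) : A *ᵥ v = lmin hA • v := by
  set vE : EuclideanSpace ℝ (Fin 3) := WithLp.toLp 2 v with hvE
  set c : Fin 3 → ℝ := fun i => hA.eigenvectorBasis.repr vE i with hc
  have hn : ∑ i, c i * c i = 1 := by rw [hc]; simp only []; rw [← norm_expand hA vE]; exact hv
  have hq' : ∑ i, hA.eigenvalues i * (c i * c i) = lmin hA := by
    rw [hc]; simp only []; rw [← quad_expand hA vE]; exact hq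
  have hzero : ∑ i, (hA.eigenvalues i - lmin hA) * (c i * c i) = 0 := by
    have : ∑ i, (hA.eigenvalues i - lmin hA) * (c i * c i)
        = (∑ i, hA.eigenvalues i * (c i * c i)) - lmin hA * ∑ i, c i * c i := by
      rw [Finset.mul_sum, ← Finset.sum_sub_distrib]
      exact Finset.sum_congr rfl fun i _ => by ring
    rw [this, hq', hn, mul_one, sub_self]
  have hterm : ∀ i ∈ Finset.univ, (hA.eigenvalues i - lmin hA) * (c i * c i) = 0 := by
    rw [← Finset.sum_eq_zero_iff_of_nonneg]
    · exact hzero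
    · intro i _
      exact mul_nonneg (sub_nonneg.mpr (lmin_le hA i)) (mul_self_nonneg _)
  have hkey : ∀ i, hA.eigenvalues i * c i = lmin hA * c i := by
    intro i
    have := hterm i (Finset.mem_univ i)
    rcases mul_eq_zero.mp this with h | h
    · rw [show hA.eigenvalues i = lmin hA from by linarith [sub_eq_zero.mp h]]
    · rcases mul_self_eq_zero.mp h with h
      rw [h, mul_zero, mul_zero]
  have : Matrix.toEuclideanLin A vE = lmin hA • vE := by
    apply hA.eigenvectorBasis.repr.injective
    apply PiLp.ext
    intro i
    rw [repr_mulVec hA vE i, LinearIsometryEquiv.map_smul]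
    show hA.eigenvalues i * c i = lmin hA * c i
    exact hkey i
  have h2 := congrArg (WithLp.equiv 2 (Fin 3 → ℝ)) this
  simpa [Matrix.toEuclideanLin_apply] using h2

lemma trace_eq_sum (hA : A.IsHermitian) : A.trace = ∑ i, hA.eigenvalues i := by
  conv_lhs => rw [hA.spectral_theorem, Unitary.conjStarAlgAut_apply]
  rw [Matrix.trace_mul_cycle]
  rw [show (star (hA.eigenvectorUnitary : Matrix (Fin 3) (Fin 3) ℝ))
      * (hA.eigenvectorUnitary : Matrix (Fin 3) (Fin 3) ℝ) = 1 from
    Unitary.coe_star_mul_self hA.eigenvectorUnitary, one_mul, Matrix.trace_diagonal]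
  simp [RCLike.ofReal_real_eq_id]

lemma trace_sq_eq_sum (hA : A.IsHermitian) :
    (A * A).trace = ∑ i, hA.eigenvalues i * hA.eigenvalues i := by
  set U := (hA.eigenvectorUnitary : Matrix (Fin 3) (Fin 3) ℝ)
  set D := Matrix.diagonal (RCLike.ofReal ∘ hA.eigenvalues : Fin 3 → ℝ)
  have hsUU : star U * U = 1 := Unitary.coe_star_mul_self hA.eigenvectorUnitary
  have h1 : A * A = U * (D * D) * star U := by
    conv_lhs => rw [hA.spectral_theorem, Unitary.conjStarAlgAut_apply]
    show U * D * star U * (U * D * star U) = _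
    have h2 : U * D * star U * (U * D * star U) = U * D * ((star U * U) * (D * star U)) := by
      noncomm_ring
    rw [h2, hsUU, Matrix.one_mul]
    noncomm_ring
  rw [h1, Matrix.trace_mul_cycle, ← Matrix.mul_assoc, hsUU, Matrix.one_mul]
  rw [show D * D = Matrix.diagonal (fun i => hA.eigenvalues i * hA.eigenvalues i) from ?_]
  · rw [Matrix.trace_diagonal]
  · rw [Matrix.diagonal_mul_diagonal]
    congr 1

lemma abs_le_one_of_unit {v : Fin 3 → ℝ} (hv : v ⬝ᵥ v = 1) (i : Fin 3) : |v i| ≤ 1 := by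
  have h1 : v i * v i ≤ 1 := by
    rw [← hv]
    exact Finset.single_le_sum (f := fun j => v j * v j)
      (fun j _ => mul_self_nonneg _) (Finset.mem_univ i)
  nlinarith [abs_nonneg (v i), sq_abs (v i)]

lemma quad_abs_le {v : Fin 3 → ℝ} (hv : v ⬝ᵥ v = 1) (M : Matrix (Fin 3) (Fin 3) ℝ) :
    |v ⬝ᵥ (M *ᵥ v)| ≤ ∑ i, ∑ j, |M i j| := by
  have h1 : v ⬝ᵥ (M *ᵥ v) = ∑ i, ∑ j, v i * M i j * v j := by
    simp [dotProduct, Matrix.mulVec, Finset.mul_sum, mul_assoc]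
  rw [h1]
  calc |∑ i, ∑ j, v i * M i j * v j| ≤ ∑ i, |∑ j, v i * M i j * v j| :=
        Finset.abs_sum_le_sum_abs _ _
    _ ≤ ∑ i, ∑ j, |v i * M i j * v j| :=
        Finset.sum_le_sum fun i _ => Finset.abs_sum_le_sum_abs _ _
    _ ≤ ∑ i, ∑ j, |M i j| := by
        refine Finset.sum_le_sum fun i _ => Finset.sum_le_sum fun j _ => ?_
        rw [abs_mul, abs_mul]
        calc |v i| * |M i j| * |v j| ≤ 1 * |M i j| * 1 := by
              apply mul_le_mul (mul_le_mul (abs_le_one_of_unit hv i) le_rfl (abs_nonneg _)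
                (by norm_num)) (abs_le_one_of_unit hv j) (abs_nonneg _)
              positivity
          _ = |M i j| := by ring

lemma lmin_comp (hA : A.IsHermitian) (hB : B.IsHermitian) :
    lmin hA ≤ lmin hB + ∑ i, ∑ j, |A i j - B i j| := by
  obtain ⟨v, hv1, hv2⟩ := exists_eigvec hB
  have h1 : lmin hA ≤ v ⬝ᵥ (A *ᵥ v) := lmin_le_quad hA v hv1
  have h2 : v ⬝ᵥ (A *ᵥ v) = lmin hB + v ⬝ᵥ ((A - B) *ᵥ v) := by
    rw [Matrix.sub_mulVec, dotProduct_sub, hv2, dotProduct_smul, smul_eq_mul, hv1, mul_one]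
    ring
  have h3 := (abs_le.mp (quad_abs_le hv1 (A - B))).2
  have h4 : ∀ i j, (A - B) i j = A i j - B i j := fun i j => rfl
  calc lmin hA ≤ lmin hB + v ⬝ᵥ ((A - B) *ᵥ v) := by rw [← h2]; exact h1
    _ ≤ lmin hB + ∑ i, ∑ j, |A i j - B i j| := by
        refine add_le_add (le_refl _) ?_
        refine le_trans h3 (le_of_eq ?_)
        exact Finset.sum_congr rfl fun i _ => Finset.sum_congr rfl fun j _ => by rw [h4]

lemma sumsq_le (x y z m : ℝ) (hsum : x + y + z = 0) (hx : m ≤ x) (hy : m ≤ y) (hz : m ≤ z)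
    (hm : m = x ∨ m = y ∨ m = z) : x*x + y*y + z*z ≤ 6*m^2 := by
  rcases hm with rfl|rfl|rfl
  · nlinarith [mul_nonneg (sub_nonneg.mpr hy) (sub_nonneg.mpr hz)]
  · nlinarith [mul_nonneg (sub_nonneg.mpr hx) (sub_nonneg.mpr hz)]
  · nlinarith [mul_nonneg (sub_nonneg.mpr hx) (sub_nonneg.mpr hy)]

/-- bounds on `tr(A²)` for traceless symmetric `A`. -/
lemma r_bounds (hA : A.IsHermitian) (htr : A.trace = 0) :
    0 ≤ (A * A).trace ∧ (A * A).trace ≤ 6 * (lmin hA)^2 := by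
  have hsum : hA.eigenvalues 0 + hA.eigenvalues 1 + hA.eigenvalues 2 = 0 := by
    have := trace_eq_sum hA
    rw [htr] at this
    rw [Fin.sum_univ_three] at this
    linarith
  have hsq := trace_sq_eq_sum hA
  rw [Fin.sum_univ_three] at hsq
  constructor
  · rw [hsq]
    have := mul_self_nonneg (hA.eigenvalues 0)
    have := mul_self_nonneg (hA.eigenvalues 1)
    have := mul_self_nonneg (hA.eigenvalues 2)
    linarith
  · rw [hsq]
    obtain ⟨i, hi⟩ := exists_lmin hA
    refine sumsq_le _ _ _ _ hsum (lmin_le hA 0) (lmin_le hA 1) (lmin_le hA 2) ?_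
    fin_cases i
    · exact Or.inl hi.symm
    · exact Or.inr (Or.inl hi.symm)
    · exact Or.inr (Or.inr hi.symm)

set_option maxHeartbeats 2000000 in
lemma key_ineq (a b c s K : ℝ) (hc : 0 < c) (hb : 0 < b) (hs0 : 0 ≤ s)
    (hrel : 2*c*s^2 - b*s + 3*a = 0) (hab : -(b^2/(3*c)) < a)
    (hK : K = |a| + 2*b*s/3 + b + 1)
    (F lam r : ℝ) (hF0 : 0 < F) (hF1 : F ≤ 1) (hlam : lam = -(s/3) - F)
    (hr0 : 0 ≤ r) (hr6 : r ≤ 6*lam^2) :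
    -(K*F) < -a*lam + b*lam^2 - b*r/3 - c*r*lam := by
  have hKpos : 0 < K := by
    rw [hK]
    have := abs_nonneg a
    nlinarith
  have hlamneg : lam < 0 := by rw [hlam]; nlinarith
  rcases le_or_gt (b/3 + c*lam) 0 with h|h
  · have h1 : -b*r/3 - c*r*lam = r * (-(b/3 + c*lam)) := by ring
    have h2 : 0 ≤ r * (-(b/3 + c*lam)) := mul_nonneg hr0 (by linarith)
    have h3 : b/(3*c) ≤ -lam := by
      rw [div_le_iff₀ (by linarith : (0:ℝ) < 3*c)]
      nlinarith
    have h4 : 0 < a - b*lam := by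
      have hb2 : b^2/(3*c) ≤ -(b * lam) := by
        have e1 : b^2/(3*c) = (b/(3*c)) * b := by field_simp
        rw [e1]
        nlinarith
      nlinarith
    have h5 : 0 < (-lam) * (a - b*lam) := mul_pos (by linarith) h4
    have h6 : 0 < K * F := mul_pos hKpos hF0
    nlinarith
  · have h1 : -b*r/3 - c*r*lam ≥ -(6*lam^2) * (b/3 + c*lam) := by nlinarith
    have h2 : -a*lam + b*lam^2 - (6*lam^2) * (b/3 + c*lam)
        = F*(a - 2*b*s/3 + 2*c*s^2 + (6*c*s - b)*F + 6*c*F^2) := by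
      rw [hlam]; linear_combination (s/9) * hrel
    have h3 : a - 2*b*s/3 + 2*c*s^2 + (6*c*s - b)*F + 6*c*F^2 > -K := by
      rw [hK]
      have h6 : 0 ≤ 6*c*s*F := by positivity
      have h7 : 0 ≤ 6*c*F^2 := by positivity
      have h8 : -(b*F) ≥ -b := by nlinarith
      have := neg_abs_le a
      nlinarith
    have h4 : F * (-K) < F * (a - 2*b*s/3 + 2*c*s^2 + (6*c*s - b)*F + 6*c*F^2) :=
      mul_lt_mul_of_pos_left h3 hF0
    have h5 : F * (-K) = -(K*F) := by ring
    have h9 : -(K*F) < -a*lam + b*lam^2 - (6*lam^2) * (b/3 + c*lam) := by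
      rw [h2]; linarith
    linarith

lemma quad_rep (v : Fin 3 → ℝ) (M : Matrix (Fin 3) (Fin 3) ℝ) :
    v ⬝ᵥ (M *ᵥ v) = ∑ i, ∑ j, v i * M i j * v j := by
  simp [dotProduct, Matrix.mulVec, Finset.mul_sum, mul_assoc]

lemma quad_tendsto {wn : ℕ → Fin 3 → ℝ} {Mn : ℕ → Matrix (Fin 3) (Fin 3) ℝ}
    {w0 : Fin 3 → ℝ} {M0 : Matrix (Fin 3) (Fin 3) ℝ}
    (hw : ∀ i, Filter.Tendsto (fun n => wn n i) Filter.atTop (nhds (w0 i)))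
    (hM : ∀ i j, Filter.Tendsto (fun n => Mn n i j) Filter.atTop (nhds (M0 i j))) :
    Filter.Tendsto (fun n => (wn n) ⬝ᵥ (Mn n *ᵥ wn n)) Filter.atTop
      (nhds (w0 ⬝ᵥ (M0 *ᵥ w0))) := by
  simp only [quad_rep]
  refine tendsto_finset_sum _ fun i _ => tendsto_finset_sum _ fun j _ => ?_
  exact ((hw i).mul (hM i j)).mul (hw j)

/-- value of the quadratic form of the RHS on a unit eigenvector. -/
lemma quad_comb (M : Matrix (Fin 3) (Fin 3) ℝ) (v : Fin 3 → ℝ) (mu aa bb cc dd : ℝ)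
    (hv : v ⬝ᵥ v = 1) (heig : M *ᵥ v = mu • v) :
    v ⬝ᵥ ((aa • M + bb • (M * M) - dd • (1 : Matrix (Fin 3) (Fin 3) ℝ) - cc • M) *ᵥ v)
      = aa * mu + bb * mu^2 - dd - cc * mu := by
  have hMM : (M * M) *ᵥ v = (mu * mu) • v := by
    rw [← Matrix.mulVec_mulVec, heig, Matrix.mulVec_smul, heig, smul_smul]
  rw [Matrix.sub_mulVec, Matrix.sub_mulVec, Matrix.add_mulVec]
  rw [Matrix.smul_mulVec, Matrix.smul_mulVec, Matrix.smul_mulVec,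
    Matrix.smul_mulVec, Matrix.one_mulVec, heig, hMM]
  rw [dotProduct_sub, dotProduct_sub, dotProduct_add]
  simp only [dotProduct_smul, smul_eq_mul, smul_smul]
  rw [hv]
  ring_nf

end BulkAux

open BulkAux Matrix in
set_option maxHeartbeats 1000000 in
/-- 3D bulk ODE, preservation of the physicality interval of
eigenvalues: with `s₊ = (b + √(b²−24ac))/(4c)` and `|a| < b²/(3c)`, if all
eigenvalues of `Q(0)` lie in `[−s₊/3, 2s₊/3]`, then the eigenvalues of `Q(t)`
lie in `[−s₊/3, 2s₊/3]` for all `t ≥ 0`. -/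
theorem bulk_ode_eigenvalue_preservation_3d
    (a b c s : ℝ) (hb : 0 ≤ b) (hc : 0 < c) (hdisc : 0 ≤ b ^ 2 - 24 * a * c)
    (ha : |a| < b ^ 2 / (3 * c))
    (hs : s = (b + Real.sqrt (b ^ 2 - 24 * a * c)) / (4 * c))
    (Q : ℝ → Matrix (Fin 3) (Fin 3) ℝ)
    (hherm : ∀ t, (Q t).IsHermitian) (htr : ∀ t, (Q t).trace = 0)
    (hode : ∀ t, 0 ≤ t → ∀ i j : Fin 3,
      HasDerivWithinAt (fun u => Q u i j)
        (-a * Q t i j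
          + b * ((Q t * Q t) i j - (Q t * Q t).trace / 3 * (if i = j then 1 else 0))
          - c * (Q t * Q t).trace * Q t i j)
        (Ici 0) t)
    (hinit : ∀ i, (hherm 0).eigenvalues i ∈ Icc (-(s / 3)) (2 * s / 3)) :
    ∀ t, 0 ≤ t → ∀ i, (hherm t).eigenvalues i ∈ Icc (-(s / 3)) (2 * s / 3) := by
  classical
  -- basic scalar facts
  have hb0 : 0 < b := by
    rcases hb.lt_or_eq with h|h
    · exact h
    · exfalso; rw [← h] at ha; norm_num at ha; linarith [abs_nonneg a]
  have hs0 : 0 ≤ s := by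
    rw [hs]
    exact div_nonneg (add_nonneg hb (Real.sqrt_nonneg _)) (by linarith)
  have hrel : 2*c*s^2 - b*s + 3*a = 0 := by
    have h1 : 4*c*s - b = Real.sqrt (b^2 - 24*a*c) := by
      rw [hs]; field_simp; ring
    have h2 : (4*c*s - b)^2 = b^2 - 24*a*c := by
      rw [h1, Real.sq_sqrt hdisc]
    have h3 : 8*c*(2*c*s^2 - b*s + 3*a) = 0 := by linear_combination h2
    have h4 : (8:ℝ)*c ≠ 0 := by positivity
    exact (mul_eq_zero.mp h3).resolve_left h4
  have hab : -(b^2/(3*c)) < a := neg_lt_of_abs_lt ha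
  set K : ℝ := |a| + 2*b*s/3 + b + 1 with hK
  have hK0 : 0 < K := by
    have h1 : 0 ≤ 2*b*s := by positivity
    have := abs_nonneg a
    rw [hK]; linarith
  set m : ℝ → ℝ := fun u => lmin (hherm u) with hm
  set rr : ℝ → ℝ := fun u => (Q u * Q u).trace with hrr
  have hr0 : ∀ u, 0 ≤ rr u := fun u => (r_bounds (hherm u) (htr u)).1
  have hr6 : ∀ u, rr u ≤ 6 * (m u)^2 := fun u => (r_bounds (hherm u) (htr u)).2
  set DM : ℝ → Matrix (Fin 3) (Fin 3) ℝ := fun u =>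
    (-a) • Q u + b • (Q u * Q u) - (b * rr u / 3) • (1 : Matrix (Fin 3) (Fin 3) ℝ)
      - (c * rr u) • Q u with hDM
  have hDMode : ∀ u, 0 ≤ u → ∀ i j, HasDerivWithinAt (fun z => Q z i j) (DM u i j) (Ici 0) u := by
    intro u hu i j
    have h := hode u hu i j
    have hsuff : DM u i j = -a * Q u i j
        + b * ((Q u * Q u) i j - (Q u * Q u).trace / 3 * (if i = j then 1 else 0))
        - c * (Q u * Q u).trace * Q u i j := by
      simp only [hDM, hrr, Matrix.sub_apply, Matrix.add_apply, Matrix.smul_apply,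
        smul_eq_mul, Matrix.one_apply]
      by_cases hij : i = j <;> simp [hij] <;> ring
    rw [hsuff]; exact h
  have hQc : ∀ i j, ContinuousOn (fun u => Q u i j) (Ici 0) :=
    fun i j u hu => ((hDMode u hu i j).continuousWithinAt)
  -- continuity of m within Ici 0
  have hmc : ∀ x ∈ Ici (0:ℝ), ContinuousWithinAt m (Ici 0) x := by
    intro x hx
    have hE : Filter.Tendsto (fun z => ∑ i, ∑ j, |Q z i j - Q x i j|)
        (nhdsWithin x (Ici 0)) (nhds 0) := by
      have h0 : (0:ℝ) = ∑ _i : Fin 3, ∑ _j : Fin 3, (0:ℝ) := by simp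
      rw [h0]
      refine tendsto_finset_sum _ fun i _ => tendsto_finset_sum _ fun j _ => ?_
      have h1 : Filter.Tendsto (fun z => Q z i j - Q x i j) (nhdsWithin x (Ici 0)) (nhds 0) := by
        simpa using Filter.Tendsto.sub (hQc i j x hx) (tendsto_const_nhds (x := Q x i j))
      simpa using h1.abs
    have hub : ∀ z, |m z - m x| ≤ ∑ i, ∑ j, |Q z i j - Q x i j| := by
      intro z
      rw [abs_sub_le_iff]
      constructor
      · have := lmin_comp (hherm z) (hherm x); simp only [hm]; linarith
      · have h2 := lmin_comp (hherm x) (hherm z)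
        have h3 : ∑ i, ∑ j, |Q x i j - Q z i j| = ∑ i, ∑ j, |Q z i j - Q x i j| :=
          Finset.sum_congr rfl fun i _ => Finset.sum_congr rfl fun j _ => abs_sub_comm _ _
        rw [h3] at h2; simp only [hm]; linarith
    have hsub : Filter.Tendsto (fun z => m z - m x) (nhdsWithin x (Ici 0)) (nhds 0) :=
      squeeze_zero_norm (fun z => by simpa [Real.norm_eq_abs] using hub z) hE
    have h4 : Filter.Tendsto m (nhdsWithin x (Ici 0)) (nhds (m x)) := by
      have := hsub.add_const (m x)
      simpa using this
    exact h4
  set gv : ℝ → ℝ := fun u => -a * m u + b * (m u)^2 - b * rr u / 3 - c * rr u * m u with hgv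
  -- the key liminf-slope estimate
  have hfreq : ∀ x, 0 ≤ x → ∀ p, -(gv x) < p →
      ∃ᶠ z in nhdsWithin x (Ioi x), slope (fun u => -(m u)) x z < p := by
    intro x hx p hp
    by_contra hcon
    rw [Filter.not_frequently] at hcon
    have hev : ∀ᶠ z in nhdsWithin x (Ioi x), p ≤ slope (fun u => -(m u)) x z := by
      filter_upwards [hcon] with z hz
      exact not_lt.mp hz
    obtain ⟨zs, hzs⟩ := Filter.exists_seq_tendsto (nhdsWithin x (Ioi x))
    have hch : ∀ u : ℝ, ∃ v : Fin 3 → ℝ, v ⬝ᵥ v = 1 ∧ Q u *ᵥ v = m u • v := by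
      intro u
      simp only [hm]
      exact exists_eigvec (hherm u)
    choose w hw1 hw2 using hch
    set ws : ℕ → EuclideanSpace ℝ (Fin 3) := fun n => WithLp.toLp 2 (w (zs n)) with hws
    have hsph : ∀ n, ws n ∈ Metric.sphere (0 : EuclideanSpace ℝ (Fin 3)) 1 := by
      intro n
      rw [mem_sphere_zero_iff_norm]
      have h1 : ‖ws n‖ * ‖ws n‖ = 1 := by
        rw [← real_inner_self_eq_norm_mul_norm, inner_dot]
        exact hw1 (zs n)
      nlinarith [norm_nonneg (ws n)]
    obtain ⟨w0, hw0s, φ, hφ, hwconv⟩ :=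
      (isCompact_sphere (0 : EuclideanSpace ℝ (Fin 3)) 1).tendsto_subseq hsph
    have hzφ : Filter.Tendsto (fun n => zs (φ n)) Filter.atTop (nhdsWithin x (Ioi x)) :=
      hzs.comp hφ.tendsto_atTop
    have hsub1 : nhdsWithin x (Ioi x) ≤ nhdsWithin x (Ici 0 \ {x}) :=
      nhdsWithin_mono x (fun z hz => ⟨le_trans hx (le_of_lt hz), ne_of_gt hz⟩)
    have hsub2 : nhdsWithin x (Ioi x) ≤ nhdsWithin x (Ici 0) :=
      nhdsWithin_mono x (fun z hz => le_trans hx (le_of_lt hz))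
    have hcoord : ∀ i, Filter.Tendsto (fun n => w (zs (φ n)) i) Filter.atTop
        (nhds ((w0 : Fin 3 → ℝ) i)) := by
      intro i
      exact ((EuclideanSpace.proj (𝕜 := ℝ) i).continuous.tendsto w0).comp hwconv
    have hQlim : ∀ i j, Filter.Tendsto (fun n => Q (zs (φ n)) i j) Filter.atTop
        (nhds (Q x i j)) :=
      fun i j => (hQc i j x hx).tendsto.comp (hzφ.mono_right hsub2)
    have hSlim : ∀ i j, Filter.Tendsto (fun n => slope (fun u => Q u i j) x (zs (φ n)))
        Filter.atTop (nhds (DM x i j)) := by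
      intro i j
      have h1 := (hasDerivWithinAt_iff_tendsto_slope).mp (hDMode x hx i j)
      exact h1.comp (hzφ.mono_right hsub1)
    have hmlim : Filter.Tendsto (fun n => m (zs (φ n))) Filter.atTop (nhds (m x)) :=
      (hmc x hx).tendsto.comp (hzφ.mono_right hsub2)
    have hw0u : (w0 : Fin 3 → ℝ) ⬝ᵥ (w0 : Fin 3 → ℝ) = 1 := by
      have h1 : ‖w0‖ = 1 := mem_sphere_zero_iff_norm.mp hw0s
      have h2 := inner_dot w0 w0
      rw [real_inner_self_eq_norm_mul_norm, h1] at h2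
      simpa using h2.symm
    have hq0 : (w0 : Fin 3 → ℝ) ⬝ᵥ (Q x *ᵥ (w0 : Fin 3 → ℝ)) = m x := by
      have hqt : Filter.Tendsto
          (fun n => (w (zs (φ n))) ⬝ᵥ (Q (zs (φ n)) *ᵥ w (zs (φ n)))) Filter.atTop
          (nhds ((w0 : Fin 3 → ℝ) ⬝ᵥ (Q x *ᵥ (w0 : Fin 3 → ℝ)))) :=
        quad_tendsto hcoord hQlim
      have heq : ∀ n, (w (zs (φ n))) ⬝ᵥ (Q (zs (φ n)) *ᵥ w (zs (φ n))) = m (zs (φ n)) := by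
        intro n
        rw [hw2, dotProduct_smul, smul_eq_mul, hw1, mul_one]
      exact tendsto_nhds_unique (by simpa only [heq] using hqt) hmlim
    have heig0 : Q x *ᵥ (w0 : Fin 3 → ℝ) = m x • (w0 : Fin 3 → ℝ) := by
      have h1 : m x = lmin (hherm x) := by rw [hm]
      rw [h1] at hq0 ⊢
      exact eigvec_of_quad_eq (hherm x) w0 hw0u hq0
    have hval : (w0 : Fin 3 → ℝ) ⬝ᵥ (DM x *ᵥ (w0 : Fin 3 → ℝ)) = gv x := by
      have h := quad_comb (Q x) w0 (m x) (-a) b (c * rr x) (b * rr x / 3) hw0u heig0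
      have hDMx : DM x = (-a) • Q x + b • (Q x * Q x)
          - (b * rr x / 3) • (1 : Matrix (Fin 3) (Fin 3) ℝ) - (c * rr x) • Q x := by
        rw [hDM]
      rw [hDMx, h, hgv]
    -- slope comparison along the sequence
    have hslope_m : ∀ z, z ∈ Ioi x →
        (w z) ⬝ᵥ ((Matrix.of fun i j => slope (fun u => Q u i j) x z) *ᵥ w z)
          ≤ slope m x z := by
      intro z hz
      have hd : 0 < z - x := sub_pos.mpr hz
      have hdne : z - x ≠ 0 := ne_of_gt hd
      have hrep : (w z) ⬝ᵥ ((Matrix.of fun i j => slope (fun u => Q u i j) x z) *ᵥ w z)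
          = ((w z) ⬝ᵥ (Q z *ᵥ w z) - (w z) ⬝ᵥ (Q x *ᵥ w z)) / (z - x) := by
        rw [quad_rep, quad_rep, quad_rep, eq_div_iff hdne, ← Finset.sum_sub_distrib,
          Finset.sum_mul]
        refine Finset.sum_congr rfl fun i _ => ?_
        rw [← Finset.sum_sub_distrib, Finset.sum_mul]
        refine Finset.sum_congr rfl fun j _ => ?_
        rw [Matrix.of_apply, slope_def_field]
        field_simp
      have h1 : (w z) ⬝ᵥ (Q z *ᵥ w z) = m z := by
        rw [hw2, dotProduct_smul, smul_eq_mul, hw1, mul_one]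
      have h2 : m x ≤ (w z) ⬝ᵥ (Q x *ᵥ w z) := by
        have := lmin_le_quad (hherm x) (w z) (hw1 z)
        simpa [hm] using this
      rw [hrep, h1, slope_def_field]
      exact (div_le_div_iff_of_pos_right hd).mpr (by linarith)
    have hzsIφ : ∀ᶠ n in Filter.atTop, zs (φ n) ∈ Ioi x :=
      hzφ.eventually eventually_mem_nhdsWithin
    have hzpφ : ∀ᶠ n in Filter.atTop, p ≤ slope (fun u => -(m u)) x (zs (φ n)) :=
      hzφ.eventually hev
    have hfin : ∀ᶠ n in Filter.atTop,
        (w (zs (φ n))) ⬝ᵥ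
          ((Matrix.of fun i j => slope (fun u => Q u i j) x (zs (φ n))) *ᵥ w (zs (φ n))) ≤ -p := by
      filter_upwards [hzsIφ, hzpφ] with n h1 h2
      have h3 : slope (fun u => -(m u)) x (zs (φ n)) = -(slope m x (zs (φ n))) := by
        rw [slope_def_field, slope_def_field]
        ring
      rw [h3] at h2
      have h4 := hslope_m (zs (φ n)) h1
      linarith
    have hlim2 : Filter.Tendsto
        (fun n => (w (zs (φ n))) ⬝ᵥ
          ((Matrix.of fun i j => slope (fun u => Q u i j) x (zs (φ n))) *ᵥ w (zs (φ n))))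
        Filter.atTop (nhds ((w0 : Fin 3 → ℝ) ⬝ᵥ (DM x *ᵥ (w0 : Fin 3 → ℝ)))) :=
      quad_tendsto hcoord (fun i j => hSlim i j)
    have h5 : (w0 : Fin 3 → ℝ) ⬝ᵥ (DM x *ᵥ (w0 : Fin 3 → ℝ)) ≤ -p := le_of_tendsto hlim2 hfin
    rw [hval] at h5
    linarith
  -- Gronwall-type barrier argument
  intro t ht
  have hm0 : -(s/3) ≤ m 0 := by
    obtain ⟨i, hi⟩ := exists_lmin (hherm 0)
    have h1 := (hinit i).1
    rw [hi] at h1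
    simpa [hm] using h1
  have hmt : -(s/3) ≤ m t := by
    by_contra hcon
    push_neg at hcon
    set δ : ℝ := -(s/3) - m t with hδ
    have hδ0 : 0 < δ := by rw [hδ]; linarith
    set ε : ℝ := min (δ/2) 1 * Real.exp (-(K*t)) with hε
    have hε0 : 0 < ε := mul_pos (lt_min (by linarith) one_pos) (Real.exp_pos _)
    set B : ℝ → ℝ := fun u => s/3 + ε * Real.exp (K*u) with hB
    set B' : ℝ → ℝ := fun u => ε * (Real.exp (K*u) * K) with hB'
    have hBapp : ∀ u, B u = s/3 + ε * Real.exp (K*u) := fun u => by rw [hB]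
    have hB'app : ∀ u, B' u = ε * (Real.exp (K*u) * K) := fun u => by rw [hB']
    have hBD : ∀ u, HasDerivAt B (B' u) u := by
      intro u
      have h1 : HasDerivAt (fun v : ℝ => K*v) K u := by
        simpa using (hasDerivAt_id u).const_mul K
      have h2 := h1.exp
      have h3 := (h2.const_mul ε).const_add (s/3)
      rw [hB, hB']
      exact h3
    have hfcont : ContinuousOn (fun u => -(m u)) (Icc 0 t) := by
      intro u hu
      exact ((hmc u hu.1).mono (fun z hz => hz.1)).neg
    have hf' : ∀ x ∈ Ico 0 t, ∀ p, -(gv x) < p →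
        ∃ᶠ z in nhdsWithin x (Ioi x), slope (fun u => -(m u)) x z < p :=
      fun x hx p hp => hfreq x hx.1 p hp
    have hA0 : -(m 0) ≤ B 0 := by
      rw [hBapp 0, mul_zero, Real.exp_zero, mul_one]
      linarith
    have hBc : ContinuousOn B (Icc 0 t) :=
      fun u _ => (hBD u).continuousAt.continuousWithinAt
    have hB'w : ∀ x ∈ Ico 0 t, HasDerivWithinAt B (B' x) (Ici x) x :=
      fun x _ => (hBD x).hasDerivWithinAt
    have hbound : ∀ x ∈ Ico 0 t, -(m x) = B x → -(gv x) < B' x := by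
      intro x hx hfb
      set F : ℝ := ε * Real.exp (K*x) with hF
      have hF0 : 0 < F := mul_pos hε0 (Real.exp_pos _)
      have hF1 : F ≤ 1 := by
        have h1 : Real.exp (K*x) ≤ Real.exp (K*t) :=
          Real.exp_le_exp.mpr (mul_le_mul_of_nonneg_left hx.2.le (le_of_lt hK0))
        have h2 : F ≤ ε * Real.exp (K*t) := by
          rw [hF]
          exact mul_le_mul_of_nonneg_left h1 (le_of_lt hε0)
        have h3 : ε * Real.exp (K*t) = min (δ/2) 1 * (Real.exp (-(K*t)) * Real.exp (K*t)) := by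
          rw [hε]; ring
        have h4 : Real.exp (-(K*t)) * Real.exp (K*t) = 1 := by
          rw [← Real.exp_add]; simp
        rw [h3, h4, mul_one] at h2
        exact h2.trans (min_le_right _ _)
      have hlam : m x = -(s/3) - F := by
        rw [hBapp x, ← hF] at hfb
        linarith
      have hki := key_ineq a b c s K hc hb0 hs0 hrel hab hK F (m x) (rr x)
        hF0 hF1 hlam (hr0 x) (hr6 x)
      have hBx : B' x = K * F := by
        rw [hB'app x, hF]; ring
      rw [hBx]
      have hgvx : gv x = -a * m x + b * (m x)^2 - b * rr x / 3 - c * rr x * m x := by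
        rw [hgv]
      rw [hgvx]
      linarith
    have hfinal := image_le_of_liminf_slope_right_lt_deriv_boundary'
      hfcont hf' hA0 hBc hB'w hbound (right_mem_Icc.mpr ht)
    have hBt : B t = s/3 + min (δ/2) 1 := by
      rw [hBapp t, hε, mul_assoc, ← Real.exp_add]
      simp
    rw [hBt] at hfinal
    have h2 : min (δ/2) 1 ≤ δ/2 := min_le_left _ _
    rw [hδ] at h2
    linarith
  intro i
  have hsum : (hherm t).eigenvalues 0 + (hherm t).eigenvalues 1 + (hherm t).eigenvalues 2 = 0 := by
    have h1 := trace_eq_sum (hherm t)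
    rw [htr t, Fin.sum_univ_three] at h1
    linarith
  have hlow : ∀ j, -(s/3) ≤ (hherm t).eigenvalues j := by
    intro j
    refine le_trans hmt ?_
    simpa [hm] using lmin_le (hherm t) j
  refine ⟨by simpa using hlow i, ?_⟩
  have h0 := hlow 0
  have h1 := hlow 1
  have h2 := hlow 2
  fin_cases i
  · exact (show (hherm t).eigenvalues 0 ≤ 2 * s / 3 by linarith)
  · exact (show (hherm t).eigenvalues 1 ≤ 2 * s / 3 by linarith)
  · exact (show (hherm t).eigenvalues 2 ≤ 2 * s / 3 by linarith)
end

section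
/- Let U ⊂ ℝ² be open, let n : U → ℝ² be continuously differentiable with |n(x)| = 1 for all x ∈ U, let s ∈ ℝ, and define Q(x) = s( n(x) ⊗ n(x) − I/2 ). Then at every point of U, the elastic density satisfies L1|∇Q|² + L2 ∂_jQ_{ik}∂_kQ_{ij} + L3 ∂_jQ_{ij}∂_kQ_{ik} + L4 Q_{lk}∂_lQ_{ij}∂_kQ_{ij} = K1 (div n)² + K3 (curl n)², where div n = ∂₁n₁ + ∂₂n₂, curl n = ∂₁n₂ − ∂₂n₁, K1 = (2L1 + L2 + L3)s² − L4 s³, and K3 = (2L1 + L2 + L3)s² + L4 s³. -/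
open Set

noncomputable section

/-- Appendix B: reduction of the four-constant Landau–de
Gennes elastic energy to the 2D Oseen–Frank energy. For a unit director field
`n` and `Q = s(n ⊗ n − I/2)`, the elastic density equals
`K1 (div n)² + K3 (curl n)²` with `K1 = (2L1+L2+L3)s² − L4 s³` and
`K3 = (2L1+L2+L3)s² + L4 s³`. -/
theorem oseen_frank_reduction
    (U : Set E2) (hU : IsOpen U)
    (n : E2 → E2) (hn : ContDiffOn ℝ 1 n U)
    (hunit : ∀ x ∈ U, ‖n x‖ = 1)
    (s L1 L2 L3 L4 : ℝ)
    (Q : E2 → Matrix (Fin 2) (Fin 2) ℝ)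
    (hQ : ∀ (x : E2) (i j : Fin 2),
      Q x i j = s * (n x i * n x j - if i = j then 1 / 2 else 0))
    (K1 K3 : ℝ)
    (hK1 : K1 = (2 * L1 + L2 + L3) * s ^ 2 - L4 * s ^ 3)
    (hK3 : K3 = (2 * L1 + L2 + L3) * s ^ 2 + L4 * s ^ 3) :
    ∀ x ∈ U,
      L1 * (∑ k, ∑ i, ∑ j, (pd k (fun y => Q y i j) x) ^ 2)
        + L2 * (∑ i, ∑ j, ∑ k, pd j (fun y => Q y i k) x * pd k (fun y => Q y i j) x)
        + L3 * (∑ i, (∑ j, pd j (fun y => Q y i j) x) * (∑ k, pd k (fun y => Q y i k) x))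
        + L4 * (∑ l, ∑ k, Q x l k *
            (∑ i, ∑ j, pd l (fun y => Q y i j) x * pd k (fun y => Q y i j) x))
      = K1 * (pd 0 (fun y => n y 0) x + pd 1 (fun y => n y 1) x) ^ 2
        + K3 * (pd 0 (fun y => n y 1) x - pd 1 (fun y => n y 0) x) ^ 2 := by
  intro x hx
  have hdn : DifferentiableAt ℝ n x :=
    (hn.contDiffAt (hU.mem_nhds hx)).differentiableAt one_ne_zero
  have hd : ∀ i, DifferentiableAt ℝ (fun y => n y i) x := fun i => by
    exact ((EuclideanSpace.proj (𝕜 := ℝ) i).differentiableAt.comp x hdn)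
  -- derivative of Q components
  have pdQ : ∀ (k i j : Fin 2), pd k (fun y => Q y i j) x
      = s * (pd k (fun y => n y i) x * n x j + n x i * pd k (fun y => n y j) x) := by
    intro k i j
    have h1 : (fun y => Q y i j)
        = fun y => s * (n y i * n y j - if i = j then (1:ℝ)/2 else 0) :=
      funext fun y => hQ y i j
    rw [h1]
    unfold pd
    rw [fderiv_const_mul (by fun_prop) s, fderiv_sub_const, fderiv_fun_mul (hd i) (hd j)]
    simp [mul_comm]
    ring
  -- unit-norm constraints
  have hsq : ∀ y ∈ U, n y 0 * n y 0 + n y 1 * n y 1 = 1 := by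
    intro y hy
    have h := hunit y hy
    rw [EuclideanSpace.norm_eq] at h
    have h2 : (∑ i, ‖n y i‖ ^ 2) = 1 := Real.sqrt_eq_one.mp h
    simpa [Fin.sum_univ_two, Real.norm_eq_abs, sq_abs, sq, one_pow] using h2
  have hu : n x 0 * n x 0 + n x 1 * n x 1 = 1 := hsq x hx
  have con : ∀ k : Fin 2,
      n x 0 * pd k (fun y => n y 0) x + n x 1 * pd k (fun y => n y 1) x = 0 := by
    intro k
    have heq : (fun y => n y 0 * n y 0 + n y 1 * n y 1) =ᶠ[nhds x] (fun _ => (1:ℝ)) :=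
      Filter.eventuallyEq_of_mem (hU.mem_nhds hx) hsq
    have h0 : fderiv ℝ (fun y => n y 0 * n y 0 + n y 1 * n y 1) x = 0 := by
      rw [heq.fderiv_eq]; exact fderiv_const_apply 1
    have h1 : fderiv ℝ (fun y => n y 0 * n y 0 + n y 1 * n y 1) x =
        fderiv ℝ (fun y => n y 0 * n y 0) x + fderiv ℝ (fun y => n y 1 * n y 1) x :=
      fderiv_add (by fun_prop) (by fun_prop)
    have h2 : ∀ i, fderiv ℝ (fun y => n y i * n y i) x (EuclideanSpace.single k 1)
        = 2 * (n x i * pd k (fun y => n y i) x) := by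
      intro i
      rw [fderiv_fun_mul (hd i) (hd i)]
      simp [pd]; ring
    have := congrArg (fun L => L (EuclideanSpace.single k 1)) (h0.symm.trans h1)
    simp only [ContinuousLinearMap.add_apply, h2, ContinuousLinearMap.zero_apply] at this
    linarith [this]
  -- abbreviations
  simp only [Fin.sum_univ_two, pdQ, hQ x]
  rw [hK1, hK3]
  norm_num
  set a := n x 0 with ha
  set b := n x 1 with hb
  set p00 := pd 0 (fun y => n y 0) x with hp00
  set p01 := pd 0 (fun y => n y 1) x with hp01
  set p10 := pd 1 (fun y => n y 0) x with hp10
  set p11 := pd 1 (fun y => n y 1) x with hp11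
  have con0 : a * p00 + b * p01 = 0 := con 0
  have con1 : a * p10 + b * p11 = 0 := con 1
  obtain ⟨t0, ht0⟩ : ∃ t, a * p01 - b * p00 = t := ⟨_, rfl⟩
  obtain ⟨t1, ht1⟩ : ∃ t, a * p11 - b * p10 = t := ⟨_, rfl⟩
  have e00 : p00 = -b * t0 := by linear_combination a * con0 - p00 * hu - b * ht0
  have e01 : p01 = a * t0 := by linear_combination b * con0 - p01 * hu + a * ht0
  have e10 : p10 = -b * t1 := by linear_combination a * con1 - p10 * hu - b * ht1
  have e11 : p11 = a * t1 := by linear_combination b * con1 - p11 * hu + a * ht1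
  rw [e00, e01, e10, e11]
  linear_combination ((2*L1+L2+L3)*s^2*(t0^2+t1^2)*(a*a+b*b)
    + L4*s^3*(2*(a*t0+b*t1)^2*((a*a+b*b)+1) - (a*a+b*b)*(t0^2+t1^2))) * hu

end
end
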